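/- arXiv:0811.1875 — 4 statements merged into one kernel-verified Lean document; each statement's English description precedes it below -/
import Mathlib

section
/- Every optimal solution T to Max Internal Spanning Tree (a spanning tree with the maximum number of internal vertices) either is a Hamiltonian path or has an independent set of leaves: no two leaves of T are adjacent in G. -/
open SimpleGraph

/-- Degree of a vertex in a graph, via set cardinality. -/
noncomputable def deg {V : Type*} (T : SimpleGraph V) (v : V) : ℕ := {u | T.Adj v u}.ncard

/-- `T` is a spanning tree of `G`. -/
def IsSpanningTree {V : Type*} (G T : SimpleGraph V) : Prop := T ≤ G ∧ T.IsTree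

/-- Number of internal vertices (degree ≥ 2). -/
noncomputable def internalCount {V : Type*} (T : SimpleGraph V) : ℕ := {v | 2 ≤ deg T v}.ncard

/-- Number of leaves (degree 1). -/
noncomputable def leafCount {V : Type*} (T : SimpleGraph V) : ℕ := {v | deg T v = 1}.ncard

/-- Number of vertices of degree exactly `i`. -/
noncomputable def degCount {V : Type*} (T : SimpleGraph V) (i : ℕ) : ℕ := {v | deg T v = i}.ncard

/-- `T` is a Hamiltonian path of `G`: a spanning tree all of whose degrees are ≤ 2. -/
def IsHamPath {V : Type*} (G T : SimpleGraph V) : Prop := IsSpanningTree G T ∧ ∀ v, deg T v ≤ 2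

namespace MISTAux

variable {V : Type*}

lemma reach_of_adj_reach {T T' : SimpleGraph V}
    (h : ∀ a b, T.Adj a b → T'.Reachable a b) {a b : V} (hr : T.Reachable a b) :
    T'.Reachable a b := by
  obtain ⟨W⟩ := hr
  induction W with
  | nil => exact Reachable.refl _
  | cons h' p ih => exact (h _ _ h').trans ih

lemma eq_join {T : SimpleGraph V} {u z v : V} {q : T.Walk u z} {r : T.Walk z v}
    (h : (q.append r).IsPath) {a : V} (ha : a ∈ q.support) (hb : a ∈ r.support) : a = z := by
  by_contra hne
  have hnodup := h.support_nodup
  rw [Walk.support_append, List.nodup_append] at hnodup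
  have hb' : a ∈ r.support.tail := by
    rw [Walk.support_eq_cons, List.mem_cons] at hb
    rcases hb with hb | hb
    · exact absurd hb hne
    · exact hb
  exact hnodup.2.2 _ ha _ hb' rfl

lemma two_nbrs {T : SimpleGraph V} {u v z : V} {P : T.Walk u v} (hP : P.IsPath)
    (hz : z ∈ P.support) (hzu : z ≠ u) (hzv : z ≠ v) :
    ∃ p s, p ≠ s ∧ T.Adj z p ∧ T.Adj z s ∧ p ∈ P.support ∧ s ∈ P.support := by
  obtain ⟨q, r, rfl⟩ := Walk.mem_support_iff_exists_append.mp hz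
  cases r with
  | nil => exact absurd rfl hzv
  | @cons _ b _ hadj r' =>
    cases hq' : q.reverse with
    | nil =>
      exfalso
      have : q = Walk.nil := by
        have := congrArg Walk.reverse hq'
        rwa [Walk.reverse_reverse] at this
      exact hzu (by cases this; rfl)
    | @cons _ c _ hadj2 q2 =>
      have hcq : c ∈ q.support := by
        rw [← List.mem_reverse, ← Walk.support_reverse, hq']
        simp
      refine ⟨c, b, ?_, hadj2, hadj, ?_, ?_⟩
      · rintro rfl
        have : c = z := eq_join hP hcq (by simp)
        exact T.irrefl (this ▸ hadj2)
      · rw [Walk.mem_support_append_iff]; left; exact hcq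
      · rw [Walk.mem_support_append_iff]; right; simp

lemma start_big [Finite V] {T : SimpleGraph V} {u v : V} (P : T.Walk u v) (hne : u ≠ v) {y : V}
    (hy : T.Adj u y) (hyn : y ∉ P.support) : 2 ≤ deg T u := by
  cases P with
  | nil => exact absurd rfl hne
  | @cons _ b _ h P' =>
    have hb : b ∈ (Walk.cons h P').support := by simp
    have hyb : y ≠ b := fun hh => hyn (hh ▸ hb)
    have hsub : ({y, b} : Set V) ⊆ {w | T.Adj u w} := by
      rintro t (rfl | rfl)
      · exact hy
      · exact h
    calc 2 = ({y, b} : Set V).ncard := (Set.ncard_pair hyb).symm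
      _ ≤ _ := Set.ncard_le_ncard hsub (Set.toFinite _)

lemma bigOnPath [Finite V] {T : SimpleGraph V} (hconn : T.Connected) {u v w₀ : V}
    (P : T.Walk u v) (hP : P.IsPath) (hu : deg T u = 1) (hv : deg T v = 1) (huv : u ≠ v)
    (hw₀ : 3 ≤ deg T w₀) : ∃ w ∈ P.support, 3 ≤ deg T w := by
  by_contra hcon
  push_neg at hcon
  have hw₀s : w₀ ∉ P.support := fun h => by have := hcon w₀ h; omega
  obtain ⟨Q⟩ := hconn.preconnected u w₀
  obtain ⟨d, _, hdS, hdnS⟩ := Q.exists_boundary_dart {z | z ∈ P.support}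
    (by simp) hw₀s
  have hzy : T.Adj d.fst d.snd := d.adj
  have hz : d.fst ∈ P.support := hdS
  have hyn : d.snd ∉ P.support := hdnS
  by_cases hzu : d.fst = u
  · rw [hzu] at hzy
    have := start_big P huv hzy hyn
    omega
  by_cases hzv : d.fst = v
  · rw [hzv] at hzy
    have := start_big P.reverse huv.symm hzy
      (by rwa [Walk.support_reverse, List.mem_reverse])
    omega
  · obtain ⟨p, s, hps, hp, hs, hpm, hsm⟩ := two_nbrs hP hz hzu hzv
    have hyp : d.snd ≠ p := fun hh => hyn (hh ▸ hpm)
    have hys : d.snd ≠ s := fun hh => hyn (hh ▸ hsm)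
    have hsub : ({d.snd, p, s} : Set V) ⊆ {w | T.Adj d.fst w} := by
      rintro t (rfl | rfl | rfl)
      · exact hzy
      · exact hp
      · exact hs
    have h3 : ({d.snd, p, s} : Set V).ncard = 3 := by
      rw [Set.ncard_insert_of_notMem (by simp [hyp, hys]) (Set.toFinite _),
        Set.ncard_pair hps]
    have := Set.ncard_le_ncard hsub (Set.toFinite _)
    rw [h3] at this
    have := hcon _ hz
    simp only [deg] at *
    omega

lemma findEdge {T : SimpleGraph V} {v a : V} (W : T.Walk a v) (ha : deg T a ≤ 2)
    (hex : ∃ w ∈ W.support, 3 ≤ deg T w) :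
    ∃ (x w' : V) (h : T.Adj x w') (q : T.Walk a x) (r : T.Walk w' v),
      W = q.append (Walk.cons h r) ∧ deg T x ≤ 2 ∧ 3 ≤ deg T w' := by
  induction W with
  | nil =>
    exfalso
    obtain ⟨w, hw, h3⟩ := hex
    rw [Walk.support_nil, List.mem_singleton] at hw
    subst hw
    omega
  | @cons a b _ h p ih =>
    by_cases hb : 3 ≤ deg T b
    · exact ⟨a, b, h, Walk.nil, p, rfl, ha, hb⟩
    · push_neg at hb
      obtain ⟨w, hw, h3⟩ := hex
      rw [Walk.support_cons, List.mem_cons] at hw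
      have hwb : w ∈ p.support := by
        rcases hw with rfl | hw
        · omega
        · exact hw
      obtain ⟨x, w', h', q, r, heq, hx2, hw3⟩ := ih (by omega) ⟨w, hwb, h3⟩
      exact ⟨x, w', h', Walk.cons h q, r, by rw [heq, Walk.cons_append], hx2, hw3⟩

end MISTAux

theorem stmt3 {V : Type*} [Fintype V] (G T : SimpleGraph V) (hG : G.Connected)
    (hT : IsSpanningTree G T)
    (hopt : ∀ T' : SimpleGraph V, IsSpanningTree G T' → internalCount T' ≤ internalCount T) :
    IsHamPath G T ∨ ∀ u v : V, deg T u = 1 → deg T v = 1 → ¬ G.Adj u v := by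
  classical
  by_cases hham : ∀ v, deg T v ≤ 2
  · exact Or.inl ⟨hT, hham⟩
  right
  push_neg at hham
  obtain ⟨w₀, hw₀⟩ := hham
  have hw₀3 : 3 ≤ deg T w₀ := hw₀
  intro u v hu hv hadj
  have huv : u ≠ v := hadj.ne
  have hTconn := hT.2.isConnected
  have hTacyc := hT.2.IsAcyclic
  -- T does not contain the edge uv
  have hTuv : ¬ T.Adj u v := by
    intro hTa
    have hP2 : (Walk.cons hTa Walk.nil).IsPath := by simp [huv]
    obtain ⟨w, hwmem, hw3⟩ := MISTAux.bigOnPath hTconn _ hP2 hu hv huv hw₀3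
    rw [Walk.support_cons, Walk.support_nil, List.mem_cons, List.mem_singleton] at hwmem
    rcases hwmem with rfl | rfl <;> omega
  -- take the tree path from u to v and find the first big vertex on it
  obtain ⟨W0⟩ := hTconn.preconnected u v
  have hP : (W0.toPath : T.Walk u v).IsPath := W0.toPath.2
  obtain ⟨w, hwmem, hwbig⟩ := MISTAux.bigOnPath hTconn _ hP hu hv huv hw₀3
  obtain ⟨x, w', hxw', q, r, heqP, hx2, hw3⟩ :=
    MISTAux.findEdge (W0.toPath : T.Walk u v) (by omega) ⟨w, hwmem, hwbig⟩
  have hxw'ne : x ≠ w' := hxw'.ne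
  have huw' : u ≠ w' := by rintro rfl; omega
  have hvw' : v ≠ w' := by rintro rfl; omega
  -- the edge s(x,w') appears neither in q nor in r
  have hnodup : (q.append (Walk.cons hxw' r)).edges.Nodup := by
    rw [← heqP]; exact hP.isTrail.edges_nodup
  rw [Walk.edges_append, Walk.edges_cons, List.nodup_append] at hnodup
  have heq : s(x, w') ∉ q.edges := fun h => hnodup.2.2 _ h _ List.mem_cons_self rfl
  have her : s(x, w') ∉ r.edges := (List.nodup_cons.mp hnodup.2.1).1
  -- the swapped graph
  set D : SimpleGraph V := T.deleteEdges {s(x, w')} with hDdef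
  set T' : SimpleGraph V := D ⊔ fromEdgeSet {s(u, v)} with hT'def
  have qD : D.Walk u x := q.toDeleteEdges {s(x, w')}
    (fun e' he' => by simp only [Set.mem_singleton_iff]; rintro rfl; exact heq he')
  have rD : D.Walk w' v := r.toDeleteEdges {s(x, w')}
    (fun e' he' => by simp only [Set.mem_singleton_iff]; rintro rfl; exact her he')
  have hT'adj : ∀ a b, T'.Adj a b ↔
      (T.Adj a b ∧ s(a, b) ≠ s(x, w')) ∨ (s(a, b) = s(u, v) ∧ a ≠ b) := by
    intro a b
    rw [hT'def, sup_adj, hDdef, deleteEdges_adj, fromEdgeSet_adj]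
    simp
  have hDle : D ≤ T' := le_sup_left
  have hT'uv : T'.Adj u v := by rw [hT'adj]; exact Or.inr ⟨rfl, huv⟩
  have hxw'reach : T'.Reachable x w' :=
    ((qD.mapLe hDle).reverse.reachable.trans
      (hT'uv.reachable.trans (rD.mapLe hDle).reverse.reachable))
  have hkey : ∀ a b, T.Adj a b → T'.Reachable a b := by
    intro a b hab
    by_cases he : s(a, b) = s(x, w')
    · rcases Sym2.eq_iff.mp he with ⟨rfl, rfl⟩ | ⟨rfl, rfl⟩
      · exact hxw'reach
      · exact hxw'reach.symm
    · exact Adj.reachable ((hT'adj a b).mpr (Or.inl ⟨hab, he⟩))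
  have hT'conn : T'.Connected := by
    have hne := hTconn.nonempty
    exact Connected.mk (fun a b => MISTAux.reach_of_adj_reach hkey (hTconn.preconnected a b))
  -- acyclicity
  have hbridgeT : ¬ (T \ fromEdgeSet {s(x, w')}).Reachable x w' :=
    ((isAcyclic_iff_forall_adj_isBridge.mp hTacyc) hxw')
  have hDuv : ¬ D.Reachable u v := fun h =>
    hbridgeT ((qD.reverse.reachable.trans h).trans rD.reverse.reachable)
  have hT'bridge : T'.IsBridge s(u, v) := by
    rw [isBridge_iff]
    refine fun hre => hDuv (hre.mono ?_)
    intro a b hab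
    change (T' \ fromEdgeSet {s(u, v)}).Adj a b at hab
    rw [sdiff_adj, fromEdgeSet_adj] at hab
    rcases (hT'adj a b).mp hab.1 with ⟨h1, h2⟩ | ⟨h1, h2⟩
    · rw [hDdef, deleteEdges_adj]
      exact ⟨h1, by simpa using h2⟩
    · exact absurd ⟨h1, h2⟩ hab.2
  have hT'acyc : T'.IsAcyclic := by
    intro z c hc
    have hne : s(u, v) ∉ c.edges :=
      hT'bridge.notMem_edges_of_isCycle hc
    have hle2 : T'.deleteEdges {s(u, v)} ≤ T := by
      intro a b hab
      rw [deleteEdges_adj] at hab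
      rcases (hT'adj a b).mp hab.1 with ⟨h1, _⟩ | ⟨h1, _⟩
      · exact h1
      · exact absurd h1 (by simpa using hab.2)
    have hc' := SimpleGraph.Walk.IsCycle.toDeleteEdges (G := T') (s := {s(u, v)}) (h := hc)
      (hp := fun e' he' hmem => hne (by rwa [Set.mem_singleton_iff.mp hmem] at he'))
    exact hTacyc _ (hc'.mapLe hle2)
  have hT'leG : T' ≤ G := by
    intro a b hab
    rcases (hT'adj a b).mp hab with ⟨h1, _⟩ | ⟨h1, _⟩
    · exact hT.1 h1
    · rcases Sym2.eq_iff.mp h1 with ⟨rfl, rfl⟩ | ⟨rfl, rfl⟩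
      · exact hadj
      · exact hadj.symm
  have hT'tree : IsSpanningTree G T' := ⟨hT'leG, hT'conn, hT'acyc⟩
  -- degree computations in T'
  have hdegw' : 2 ≤ deg T' w' := by
    have hset : {b | T'.Adj w' b} = {b | T.Adj w' b} \ {x} := by
      ext b
      simp only [Set.mem_setOf_eq, Set.mem_diff, Set.mem_singleton_iff, hT'adj]
      constructor
      · rintro (⟨h1, h2⟩ | ⟨h1, h2⟩)
        · refine ⟨h1, ?_⟩
          rintro rfl
          exact h2 (Sym2.eq_swap)
        · exfalso
          rcases Sym2.eq_iff.mp h1 with ⟨h3, _⟩ | ⟨h3, _⟩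
          · exact huw' h3.symm
          · exact hvw' h3.symm
      · rintro ⟨h1, h2⟩
        left
        refine ⟨h1, fun hcon => ?_⟩
        rcases Sym2.eq_iff.mp hcon with ⟨h3, _⟩ | ⟨_, h3⟩
        · exact hxw'ne h3.symm
        · exact h2 h3
    have hxmem : x ∈ {b | T.Adj w' b} := hxw'.symm
    have hcard := Set.ncard_diff_singleton_add_one hxmem (Set.toFinite _)
    have h3 : 3 ≤ ({b | T.Adj w' b}).ncard := hw3
    show 2 ≤ ({b | T'.Adj w' b}).ncard
    rw [hset]
    omega
  have hother : ∀ z, z ≠ u → z ≠ v → z ≠ x → z ≠ w' → deg T' z = deg T z := by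
    intro z h1 h2 h3 h4
    show ({b | T'.Adj z b}).ncard = ({b | T.Adj z b}).ncard
    congr 1
    ext b
    simp only [Set.mem_setOf_eq, hT'adj]
    constructor
    · rintro (⟨hh, _⟩ | ⟨hh, _⟩)
      · exact hh
      · exfalso
        rcases Sym2.eq_iff.mp hh with ⟨h5, _⟩ | ⟨h5, _⟩
        · exact h1 h5
        · exact h2 h5
    · intro hh
      left
      refine ⟨hh, fun hcon => ?_⟩
      rcases Sym2.eq_iff.mp hcon with ⟨h5, _⟩ | ⟨h5, _⟩
      · exact h3 h5
      · exact h4 h5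
  have hdegu : x ≠ u → deg T' u = 2 := by
    intro hxu
    have hset : {b | T'.Adj u b} = insert v {b | T.Adj u b} := by
      ext b
      simp only [Set.mem_setOf_eq, Set.mem_insert_iff, hT'adj]
      constructor
      · rintro (⟨hh, _⟩ | ⟨hh, _⟩)
        · exact Or.inr hh
        · left
          rcases Sym2.eq_iff.mp hh with ⟨_, h5⟩ | ⟨h5, _⟩
          · exact h5
          · exact absurd h5 huv
      · rintro (rfl | hh)
        · exact Or.inr ⟨rfl, huv⟩
        · left
          refine ⟨hh, fun hcon => ?_⟩
          rcases Sym2.eq_iff.mp hcon with ⟨h5, _⟩ | ⟨h5, _⟩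
          · exact hxu h5.symm
          · exact huw' h5
    have hvnot : v ∉ {b | T.Adj u b} := hTuv
    show ({b | T'.Adj u b}).ncard = 2
    rw [hset, Set.ncard_insert_of_notMem hvnot (Set.toFinite _)]
    have h1 : ({b | T.Adj u b}).ncard = 1 := hu
    omega
  have hdegv : x ≠ v → deg T' v = 2 := by
    intro hxv
    have hset : {b | T'.Adj v b} = insert u {b | T.Adj v b} := by
      ext b
      simp only [Set.mem_setOf_eq, Set.mem_insert_iff, hT'adj]
      constructor
      · rintro (⟨hh, _⟩ | ⟨hh, _⟩)
        · exact Or.inr hh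
        · left
          rcases Sym2.eq_iff.mp hh with ⟨h5, _⟩ | ⟨_, h5⟩
          · exact absurd h5 huv.symm
          · exact h5
      · rintro (rfl | hh)
        · exact Or.inr ⟨Sym2.eq_swap, huv.symm⟩
        · left
          refine ⟨hh, fun hcon => ?_⟩
          rcases Sym2.eq_iff.mp hcon with ⟨h5, _⟩ | ⟨h5, _⟩
          · exact hxv h5.symm
          · exact hvw' h5
    have hunot : u ∉ {b | T.Adj v b} := fun hh => hTuv hh.symm
    show ({b | T'.Adj v b}).ncard = 2
    rw [hset, Set.ncard_insert_of_notMem hunot (Set.toFinite _)]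
    have h1 : ({b | T.Adj v b}).ncard = 1 := hv
    omega
  -- counting
  set A : Set V := {z | 2 ≤ deg T z} with hA
  have hoptle := hopt T' hT'tree
  have hICT : internalCount T = A.ncard := rfl
  have hICT' : internalCount T' = ({z | 2 ≤ deg T' z}).ncard := rfl
  have huA : u ∉ A := by simp only [hA, Set.mem_setOf_eq, hu]; omega
  have hvA : v ∉ A := by simp only [hA, Set.mem_setOf_eq, hv]; omega
  by_cases hxu : x = u
  · -- only v becomes internal
    have hsub : insert v A ⊆ {z | 2 ≤ deg T' z} := by
      rintro z hz
      rcases Set.mem_insert_iff.mp hz with hzv | hzA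
      · have h2 := hdegv (hxu ▸ huv)
        show 2 ≤ deg T' z
        rw [hzv]
        omega
      · by_cases hzw : z = w'
        · show 2 ≤ deg T' z
          rw [hzw]
          exact hdegw'
        · have hz2 : 2 ≤ deg T z := hzA
          have hzu : z ≠ u := fun hh => huA (hh ▸ hzA)
          have hzv : z ≠ v := fun hh => hvA (hh ▸ hzA)
          show 2 ≤ deg T' z
          rw [hother z hzu hzv (hxu ▸ hzu) hzw]
          exact hz2
    have hcard : A.ncard + 1 = (insert v A).ncard :=
      (Set.ncard_insert_of_notMem hvA (Set.toFinite _)).symm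
    have := Set.ncard_le_ncard hsub (Set.toFinite _)
    omega
  by_cases hxv : x = v
  · -- only u becomes internal
    have hsub : insert u A ⊆ {z | 2 ≤ deg T' z} := by
      rintro z hz
      rcases Set.mem_insert_iff.mp hz with hzu' | hzA
      · have h2 := hdegu hxu
        show 2 ≤ deg T' z
        rw [hzu']
        omega
      · by_cases hzw : z = w'
        · show 2 ≤ deg T' z
          rw [hzw]
          exact hdegw'
        · have hz2 : 2 ≤ deg T z := hzA
          have hzu : z ≠ u := fun hh => huA (hh ▸ hzA)
          have hzv : z ≠ v := fun hh => hvA (hh ▸ hzA)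
          show 2 ≤ deg T' z
          rw [hother z hzu hzv (hxv ▸ hzv) hzw]
          exact hz2
    have hcard : A.ncard + 1 = (insert u A).ncard :=
      (Set.ncard_insert_of_notMem huA (Set.toFinite _)).symm
    have := Set.ncard_le_ncard hsub (Set.toFinite _)
    omega
  · -- u and v become internal; only x may stop being internal
    have hsub : insert u (insert v (A \ {x})) ⊆ {z | 2 ≤ deg T' z} := by
      rintro z hz
      rcases Set.mem_insert_iff.mp hz with hzu' | hz'
      · have h2 := hdegu hxu
        show 2 ≤ deg T' z
        rw [hzu']
        omega
      rcases Set.mem_insert_iff.mp hz' with hzv' | ⟨hzA, hzx⟩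
      · have h2 := hdegv hxv
        show 2 ≤ deg T' z
        rw [hzv']
        omega
      · by_cases hzw : z = w'
        · show 2 ≤ deg T' z
          rw [hzw]
          exact hdegw'
        · have hz2 : 2 ≤ deg T z := hzA
          have hzu : z ≠ u := fun hh => huA (hh ▸ hzA)
          have hzv : z ≠ v := fun hh => hvA (hh ▸ hzA)
          show 2 ≤ deg T' z
          rw [hother z hzu hzv hzx hzw]
          exact hz2
    have hvmem : v ∉ A \ {x} := fun hh => hvA hh.1
    have humem : u ∉ insert v (A \ {x}) := by
      rw [Set.mem_insert_iff]
      rintro (rfl | hh)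
      · exact huv rfl
      · exact huA hh.1
    have hd : A.ncard ≤ (A \ {x}).ncard + 1 := by
      by_cases hxA : x ∈ A
      · have := Set.ncard_diff_singleton_add_one hxA (Set.toFinite _)
        omega
      · rw [Set.diff_singleton_eq_self hxA]
        omega
    have hc1 : (insert v (A \ {x})).ncard = (A \ {x}).ncard + 1 :=
      Set.ncard_insert_of_notMem hvmem (Set.toFinite _)
    have hc2 : (insert u (insert v (A \ {x}))).ncard = (insert v (A \ {x})).ncard + 1 :=
      Set.ncard_insert_of_notMem humem (Set.toFinite _)
    have := Set.ncard_le_ncard hsub (Set.toFinite _)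
    omega
end

section
/- If a finite connected graph G on n vertices has a spanning tree with fewer than k internal vertices for every spanning tree (i.e., the maximum number of internal vertices is strictly less than k) and G has maximum degree at most 3, then for any spanning tree T, the number of leaves of T is less than k+2; consequently n ≤ 2k. -/
open SimpleGraph

private lemma reach_of_adj_reach {V : Type*} {G G' : SimpleGraph V}
    (h : ∀ {x y : V}, G.Adj x y → G'.Reachable x y) {a b : V}
    (hr : G.Reachable a b) : G'.Reachable a b := by
  obtain ⟨p⟩ := hr
  induction p with
  | nil => rfl
  | cons h' _ ih => exact (h h').trans ih

/-- Every finite connected graph has a spanning tree. -/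
private lemma exists_st {V : Type*} [Fintype V] :
    ∀ (n : ℕ) (G : SimpleGraph V), G.edgeSet.ncard ≤ n → G.Connected →
      ∃ T ≤ G, T.IsTree := by
  intro n
  induction n with
  | zero =>
    intro G hcard hG
    by_cases h : G.IsAcyclic
    · exact ⟨G, le_refl _, ⟨hG, h⟩⟩
    · exfalso
      simp only [IsAcyclic, not_forall, not_not] at h
      obtain ⟨v, c, hc⟩ := h
      cases c with
      | nil => exact absurd hc.three_le_length (by simp)
      | cons hadj p =>
        have hne : G.edgeSet.Nonempty := ⟨_, G.mem_edgeSet.mpr hadj⟩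
        have := Set.ncard_pos (Set.toFinite _) |>.mpr hne
        omega
  | succ n ih =>
    intro G hcard hG
    by_cases h : G.IsAcyclic
    · exact ⟨G, le_refl _, ⟨hG, h⟩⟩
    · rw [isAcyclic_iff_forall_adj_isBridge] at h
      push_neg at h
      obtain ⟨v, w, hadj, hbr⟩ := h
      rw [isBridge_iff] at hbr
      push_neg at hbr
      have hreach : (G \ fromEdgeSet {s(v, w)}).Reachable v w := hbr
      set G' := G \ fromEdgeSet {s(v, w)} with hG'
      have hle : G' ≤ G := sdiff_le
      have hedges : G'.edgeSet = G.edgeSet \ {s(v, w)} := by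
        rw [hG', edgeSet_sdiff, edgeSet_fromEdgeSet, edgeSet_sdiff_sdiff_isDiag]
      have hconn : G'.Connected := by
        haveI := hG.nonempty
        refine ⟨fun a b => ?_⟩
        refine reach_of_adj_reach (fun {x y} hxy => ?_) (hG.preconnected a b)
        by_cases hxy' : s(x, y) = s(v, w)
        · rw [Sym2.eq_iff] at hxy'
          rcases hxy' with ⟨rfl, rfl⟩ | ⟨rfl, rfl⟩
          · exact hreach
          · exact hreach.symm
        · refine Adj.reachable ?_
          have : s(x, y) ∈ G'.edgeSet := by
            rw [hedges]
            exact ⟨hxy, hxy'⟩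
          exact this
      have hfin : G.edgeSet.Finite := (Set.finite_univ.subset (Set.subset_univ _))
      have hlt : G'.edgeSet.ncard ≤ n := by
        have : G'.edgeSet.ncard < G.edgeSet.ncard := by
          rw [hedges]
          exact Set.ncard_diff_singleton_lt_of_mem (s := G.edgeSet)
            (G.mem_edgeSet.mpr hadj) hfin
        omega
      obtain ⟨T, hT, ht⟩ := ih G' hlt hconn
      exact ⟨T, hT.trans hle, ht⟩

private lemma ncard_setOf_eq {V : Type*} [Fintype V] (p : V → Prop) [DecidablePred p] :
    {v | p v}.ncard = (Finset.univ.filter p).card := by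
  rw [Set.ncard_eq_toFinset_card', Set.toFinset_setOf]

private lemma deg_eq_degree {V : Type*} [Fintype V] (T : SimpleGraph V) [DecidableRel T.Adj]
    (v : V) : deg T v = T.degree v := by
  rw [deg, ← SimpleGraph.neighborSet, Set.ncard_eq_toFinset_card', Set.toFinset_card]
  exact T.card_neighborSet_eq_degree v

private lemma key_counts {V : Type*} [Fintype V] (G T : SimpleGraph V)
    (hdeg : ∀ v, deg G v ≤ 3) (hn : 2 ≤ Fintype.card V) (hst : IsSpanningTree G T) :
    leafCount T ≤ internalCount T + 2 ∧
      leafCount T + internalCount T = Fintype.card V := by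
  classical
  obtain ⟨hle, ht⟩ := hst
  have hub : ∀ v, T.degree v ≤ 3 := by
    intro v
    have h1 : deg T v ≤ deg G v :=
      Set.ncard_le_ncard (fun u hu => hle hu) (Set.toFinite _)
    have := hdeg v
    rw [deg_eq_degree] at h1
    omega
  have hlb : ∀ v, 1 ≤ T.degree v := by
    intro v
    obtain ⟨u, hu⟩ := Fintype.exists_ne_of_one_lt_card (by omega) v
    obtain ⟨p⟩ := ht.isConnected.preconnected v u
    cases p with
    | nil => exact absurd rfl hu
    | cons h _ =>
      have : 0 < T.degree v := T.degree_pos_iff_exists_adj v |>.mpr ⟨_, h⟩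
      omega
  set A := Finset.univ.filter (fun v => T.degree v = 1) with hA
  set B := Finset.univ.filter (fun v => T.degree v = 2) with hB
  set C := Finset.univ.filter (fun v => T.degree v = 3) with hC
  have hdAB : Disjoint A B := by
    rw [Finset.disjoint_left]; intro v hv hv'
    simp [hA, hB] at hv hv'; omega
  have hdABC : Disjoint (A ∪ B) C := by
    rw [Finset.disjoint_left]; intro v hv hv'
    simp [hA, hB, hC] at hv hv'; omega
  have hunion : A ∪ B ∪ C = Finset.univ := by
    ext v
    have := hub v; have := hlb v
    simp [hA, hB, hC]; omega
  have hcards : A.card + B.card + C.card = Fintype.card V := by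
    rw [← Finset.card_union_of_disjoint hdAB, ← Finset.card_union_of_disjoint hdABC, hunion,
      Finset.card_univ]
  have hsum : ∑ v, T.degree v + 2 = 2 * Fintype.card V := by
    rw [T.sum_degrees_eq_twice_card_edges, ← ht.card_edgeFinset]
    ring
  have hsumsplit : ∑ v, T.degree v = A.card + 2 * B.card + 3 * C.card := by
    rw [← hunion, Finset.sum_union hdABC, Finset.sum_union hdAB]
    have h1 : ∑ v ∈ A, T.degree v = A.card := by
      rw [Finset.sum_congr rfl (fun v hv => by simp [hA] at hv; omega : ∀ v ∈ A, T.degree v = 1)]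
      simp
    have h2 : ∑ v ∈ B, T.degree v = 2 * B.card := by
      rw [Finset.sum_congr rfl (fun v hv => by simp [hB] at hv; omega : ∀ v ∈ B, T.degree v = 2)]
      simp [mul_comm]
    have h3 : ∑ v ∈ C, T.degree v = 3 * C.card := by
      rw [Finset.sum_congr rfl (fun v hv => by simp [hC] at hv; omega : ∀ v ∈ C, T.degree v = 3)]
      simp [mul_comm]
    rw [h1, h2, h3]
  have hleaf : leafCount T = A.card := by
    rw [leafCount]
    have : {v | deg T v = 1} = {v | T.degree v = 1} := by
      ext v; simp [deg_eq_degree]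
    rw [this, ncard_setOf_eq]
  have hintern : internalCount T = B.card + C.card := by
    rw [internalCount]
    have : {v | 2 ≤ deg T v} = {v | 2 ≤ T.degree v} := by
      ext v; simp [deg_eq_degree]
    rw [this, ncard_setOf_eq]
    have hint : Finset.univ.filter (fun v => 2 ≤ T.degree v) = B ∪ C := by
      ext v
      have := hub v
      simp [hB, hC]; omega
    rw [hint, Finset.card_union_of_disjoint (by
      rw [Finset.disjoint_left]; intro v hv hv'; simp [hB, hC] at hv hv'; omega)]
  rw [hleaf, hintern]
  omega

theorem stmt6 {V : Type*} [Fintype V] (G : SimpleGraph V) (hG : G.Connected)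
    (hdeg : ∀ v, deg G v ≤ 3) (hn : 2 ≤ Fintype.card V) (k : ℕ) (hk : 0 < k)
    (hmax : ∀ T : SimpleGraph V, IsSpanningTree G T → internalCount T < k) :
    (∀ T : SimpleGraph V, IsSpanningTree G T → leafCount T < k + 2) ∧
    Fintype.card V ≤ 2 * k := by
  constructor
  · intro T hT
    obtain ⟨h1, _⟩ := key_counts G T hdeg hn hT
    have := hmax T hT
    omega
  · obtain ⟨T, hTle, ht⟩ := exists_st G.edgeSet.ncard G le_rfl hG
    have hst : IsSpanningTree G T := ⟨hTle, ht⟩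
    obtain ⟨h1, h2⟩ := key_counts G T hdeg hn hst
    have := hmax T hst
    omega
end

section
/- Let G be a graph on n vertices with maximum degree Δ, and let β = (2^{Δ+1} − 1)^{1/(Δ+1)}. Then the number of subsets S ⊆ V(G) such that the induced subgraph G[S] is connected and |S| ≥ 2 is at most β^n. -/
open SimpleGraph

/-- Superadditivity of the geometric-type mean with exponent `1/k`, for at least `k` factors. -/
lemma mahlerIneq {ι : Type*} (s : Finset ι) (a b : ι → ℝ) (k : ℕ) (hk : 1 ≤ k)
    (hks : k ≤ s.card) (ha : ∀ i ∈ s, 0 ≤ a i) (hb : ∀ i ∈ s, 0 ≤ b i) :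
    (∏ i ∈ s, a i) ^ ((1 : ℝ)/k) + (∏ i ∈ s, b i) ^ ((1 : ℝ)/k)
      ≤ (∏ i ∈ s, (a i + b i)) ^ ((1 : ℝ)/k) := by
  have hkpos : (0:ℝ) < (k:ℝ) := by positivity
  have hkinv : (0:ℝ) < (1:ℝ)/k := by positivity
  by_cases hz : ∃ i ∈ s, a i + b i = 0
  · obtain ⟨i, hi, hiz⟩ := hz
    have hai : a i = 0 := le_antisymm (by nlinarith [ha i hi, hb i hi]) (ha i hi)
    have hbi : b i = 0 := by nlinarith [ha i hi, hb i hi]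
    rw [Finset.prod_eq_zero hi hai, Finset.prod_eq_zero hi hbi,
      Finset.prod_eq_zero hi hiz, Real.zero_rpow (ne_of_gt hkinv)]
    norm_num
  · push_neg at hz
    have hc : ∀ i ∈ s, 0 < a i + b i := fun i hi =>
      lt_of_le_of_ne (by have := ha i hi; have := hb i hi; linarith) (Ne.symm (hz i hi))
    have hm : (0:ℕ) < s.card := lt_of_lt_of_le hk hks
    have hmR : (0:ℝ) < (s.card : ℝ) := by exact_mod_cast hm
    set m := s.card with hmdef
    -- weighted AM-GM for a/(a+b)
    have hwsum : ∑ _i ∈ s, (1:ℝ)/m = 1 := by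
      rw [Finset.sum_const, hmdef]
      rw [nsmul_eq_mul, mul_one_div_cancel]; exact_mod_cast hm.ne'
    have amgm : ∀ (f : ι → ℝ), (∀ i ∈ s, 0 ≤ f i) →
        (∏ i ∈ s, (f i / (a i + b i))) ^ ((1:ℝ)/m) ≤ ∑ i ∈ s, (1:ℝ)/m * (f i / (a i + b i)) := by
      intro f hf
      have h := Real.geom_mean_le_arith_mean_weighted s (fun _ => (1:ℝ)/m)
        (fun i => f i / (a i + b i)) (fun i _ => by positivity)
        hwsum (fun i hi => div_nonneg (hf i hi) (hc i hi).le)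
      calc (∏ i ∈ s, (f i / (a i + b i))) ^ ((1:ℝ)/m)
          = ∏ i ∈ s, (f i / (a i + b i)) ^ ((1:ℝ)/m) :=
            (Real.finset_prod_rpow s _ (fun i hi => div_nonneg (hf i hi) (hc i hi).le) _).symm
        _ ≤ _ := h
    set c := fun i => a i + b i with hcdef
    have hcnn : ∀ i ∈ s, (0:ℝ) ≤ c i := fun i hi => (hc i hi).le
    have hprodc : (0:ℝ) < ∏ i ∈ s, c i := Finset.prod_pos hc
    have hsum1 : (∑ i ∈ s, (1:ℝ)/m * (a i / c i)) + (∑ i ∈ s, (1:ℝ)/m * (b i / c i)) = 1 := by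
      rw [← Finset.sum_add_distrib, ← hwsum]
      apply Finset.sum_congr rfl
      intro i hi
      have := (hc i hi).ne'
      field_simp [hcdef]
      have hci : c i ≠ 0 := this
      rw [hwsum, one_mul]
      exact div_self hci
    have key : ∀ (f : ι → ℝ), (∀ i ∈ s, 0 ≤ f i) →
        (∑ i ∈ s, (1:ℝ)/m * (f i / c i)) ≤ 1 →
        (∏ i ∈ s, f i) ^ ((1:ℝ)/k)
          ≤ (∑ i ∈ s, (1:ℝ)/m * (f i / c i)) * (∏ i ∈ s, c i) ^ ((1:ℝ)/k) := by
      intro f hf hle1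
      set S := ∑ i ∈ s, (1:ℝ)/m * (f i / c i) with hSdef
      have hSnn : 0 ≤ S := Finset.sum_nonneg fun i hi => by
        have := hf i hi; have := (hc i hi).le; positivity
      set X := ∏ i ∈ s, (f i / c i) with hXdef
      have hXnn : 0 ≤ X := Finset.prod_nonneg fun i hi => div_nonneg (hf i hi) (hc i hi).le
      have hXeq : X = (∏ i ∈ s, f i) / (∏ i ∈ s, c i) := by
        rw [hXdef, Finset.prod_div_distrib]
      have hXk : X ^ ((1:ℝ)/k) ≤ S := by
        rcases eq_or_lt_of_le hSnn with hS0 | hSpos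
        · -- S = 0 forces all f i = 0 hence X = 0
          have hall : ∀ i ∈ s, (1:ℝ)/m * (f i / c i) = 0 := by
            intro i hi
            have := Finset.sum_eq_zero_iff_of_nonneg (fun i hi => by
              have := hf i hi; have := (hc i hi).le; positivity) |>.mp hS0.symm
            exact this i hi
          rcases Finset.card_pos.mp hm with ⟨i0, hi0⟩
          have : f i0 / c i0 = 0 := by
            have h := hall i0 hi0
            have hmne : (1:ℝ)/m ≠ 0 := by positivity
            exact (mul_eq_zero.mp h).resolve_left hmne
          have hX0 : X = 0 := Finset.prod_eq_zero hi0 this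
          rw [hX0, Real.zero_rpow (ne_of_gt hkinv), ← hS0]
        · have hamgm := amgm f hf
          have hXm : X ^ ((1:ℝ)/m) ≤ S := hamgm
          have hXmnn : 0 ≤ X ^ ((1:ℝ)/m) := Real.rpow_nonneg hXnn _
          have hstep : X ^ ((1:ℝ)/k) = (X ^ ((1:ℝ)/m)) ^ ((m:ℝ)/k) := by
            rw [← Real.rpow_mul hXnn]
            congr 1
            field_simp
          rw [hstep]
          calc (X ^ ((1:ℝ)/m)) ^ ((m:ℝ)/k) ≤ S ^ ((m:ℝ)/k) :=
                Real.rpow_le_rpow hXmnn hXm (by positivity)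
            _ ≤ S ^ (1:ℝ) := Real.rpow_le_rpow_of_exponent_ge hSpos hle1
                ((one_le_div hkpos).mpr (by exact_mod_cast hks))
            _ = S := Real.rpow_one S
      have hprodf : (∏ i ∈ s, f i) = X * (∏ i ∈ s, c i) := by
        rw [hXeq, div_mul_cancel₀]
        exact hprodc.ne'
      rw [hprodf, Real.mul_rpow hXnn hprodc.le]
      exact mul_le_mul_of_nonneg_right hXk (Real.rpow_nonneg hprodc.le _)
    have hsb : 0 ≤ ∑ i ∈ s, (1:ℝ)/m * (b i / c i) := Finset.sum_nonneg fun i hi => by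
      have := hb i hi; have := (hc i hi).le; positivity
    have hsa : 0 ≤ ∑ i ∈ s, (1:ℝ)/m * (a i / c i) := Finset.sum_nonneg fun i hi => by
      have := ha i hi; have := (hc i hi).le; positivity
    have hka := key a ha (by linarith)
    have hkb := key b hb (by linarith)
    calc (∏ i ∈ s, a i) ^ ((1:ℝ)/k) + (∏ i ∈ s, b i) ^ ((1:ℝ)/k)
        ≤ ((∑ i ∈ s, (1:ℝ)/m * (a i / c i)) + (∑ i ∈ s, (1:ℝ)/m * (b i / c i)))
            * (∏ i ∈ s, c i) ^ ((1:ℝ)/k) := by rw [add_mul]; exact add_le_add hka hkb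
      _ = (∏ i ∈ s, (a i + b i)) ^ ((1:ℝ)/k) := by rw [hsum1, one_mul]

lemma root_le_of_pow_le {k : ℕ} (hk : 1 ≤ k) {u w : ℝ} (hu : 0 ≤ u) (h : u ^ k ≤ w) :
    u ≤ w ^ ((1:ℝ)/k) := by
  have hkR : ((k:ℝ)) ≠ 0 := by positivity
  have : u = (u ^ k) ^ ((1:ℝ)/k) := by
    rw [← Real.rpow_natCast u k, ← Real.rpow_mul hu]
    rw [mul_one_div, div_self hkR, Real.rpow_one]
  rw [this]
  exact Real.rpow_le_rpow (pow_nonneg hu k) h (by positivity)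

lemma pow_root_cancel {k : ℕ} (hk : 1 ≤ k) {w : ℝ} (hw : 0 ≤ w) :
    (w ^ ((1:ℝ)/k)) ^ k = w := by
  have hkR : ((k:ℝ)) ≠ 0 := by positivity
  rw [← Real.rpow_natCast (w ^ ((1:ℝ)/k)) k, ← Real.rpow_mul hw]
  rw [one_div, inv_mul_cancel₀ hkR, Real.rpow_one]

/-- Shearer's inequality, uniform-cover version over a finite index family. -/
lemma shearer {V : Type*} [DecidableEq V] {ι : Type*} [DecidableEq ι] (k : ℕ) (hk : 1 ≤ k)
    (s : Finset ι) (A : ι → Finset V) :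
    ∀ (U : Finset V) (F : Finset (Finset V)), (∀ S ∈ F, S ⊆ U) →
    (∀ x ∈ U, k ≤ (s.filter fun i => x ∈ A i).card) →
    (F.card : ℝ) ^ k ≤ ∏ i ∈ s, ((F.image (· ∩ A i)).card : ℝ) := by
  intro U
  induction U using Finset.strongInduction with
  | _ U ih =>
    intro F hFU hcov
    rcases F.eq_empty_or_nonempty with hF | hF
    · rw [hF]
      simp only [Finset.card_empty, Nat.cast_zero, zero_pow (by omega : k ≠ 0)]
      exact Finset.prod_nonneg fun i _ => by positivity
    rcases U.eq_empty_or_nonempty with hU | ⟨x, hx⟩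
    · have hFsing : F = {∅} := by
        apply Finset.eq_singleton_iff_nonempty_unique_mem.mpr
        refine ⟨hF, fun S hS => ?_⟩
        have := hFU S hS
        rw [hU] at this
        exact Finset.subset_empty.mp this
      rw [hFsing]
      have : ∀ i ∈ s, (({∅} : Finset (Finset V)).image (· ∩ A i)) = {∅} := by
        intro i _; simp
      rw [Finset.prod_congr rfl (fun i hi => by rw [this i hi])]
      simp
    · -- main induction step
      classical
      set U' := U.erase x with hU'def
      set F0 := F.filter (fun S => x ∉ S) with hF0def
      set Fx := F.filter (fun S => x ∈ S) with hFxdef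
      set F1 := Fx.image (fun S => S.erase x) with hF1def
      have hF1card : F1.card = Fx.card := by
        apply Finset.card_image_of_injOn
        intro S hS T hT hST
        have hxS : x ∈ S := (Finset.mem_filter.mp hS).2
        have hxT : x ∈ T := (Finset.mem_filter.mp hT).2
        have hST' : S.erase x = T.erase x := hST
        have : insert x (S.erase x) = insert x (T.erase x) := by rw [hST']
        rwa [Finset.insert_erase hxS, Finset.insert_erase hxT] at this
      have hsplit : F.card = F0.card + Fx.card := by
        rw [hF0def, hFxdef]
        rw [← Finset.card_filter_add_card_filter_not (p := fun S => x ∈ S)]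
        ring
      -- apply IH
      have hU'ss : U' ⊂ U := Finset.erase_ssubset hx
      have hcov' : ∀ y ∈ U', k ≤ (s.filter fun i => y ∈ A i).card := fun y hy =>
        hcov y (Finset.mem_of_mem_erase hy)
      have h0 := ih U' hU'ss F0 (fun S hS => by
        rw [Finset.subset_erase]
        exact ⟨hFU S (Finset.mem_of_mem_filter S hS), (Finset.mem_filter.mp hS).2⟩) hcov'
      have h1 := ih U' hU'ss F1 (fun S hS => by
        obtain ⟨T, hT, rfl⟩ := Finset.mem_image.mp hS
        exact Finset.erase_subset_erase x (hFU T (Finset.mem_of_mem_filter T hT))) hcov'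
      -- trace inequalities
      have factA : ∀ i, (F0.image (· ∩ A i)).card ≤ (F.image (· ∩ A i)).card :=
        fun i => Finset.card_le_card (Finset.image_subset_image (Finset.filter_subset _ _))
      have factB : ∀ i, (F1.image (· ∩ A i)).card ≤ (Fx.image (· ∩ A i)).card := by
        intro i
        have h1 : F1.image (· ∩ A i) = Fx.image (fun S => (S.erase x) ∩ A i) := by
          rw [hF1def, Finset.image_image]
          rfl
        have h2 : Fx.image (fun S => (S.erase x) ∩ A i)
            = (Fx.image (· ∩ A i)).image (fun T => T.erase x) := by
          rw [Finset.image_image]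
          apply Finset.image_congr
          intro S _
          simp only [Function.comp]
          ext y
          simp only [Finset.mem_inter, Finset.mem_erase]
          tauto
        rw [h1, h2]
        exact Finset.card_image_le
      have factC : ∀ i, x ∈ A i →
          (F0.image (· ∩ A i)).card + (Fx.image (· ∩ A i)).card ≤ (F.image (· ∩ A i)).card := by
        intro i hxA
        have hsub : (F0.image (· ∩ A i)) ∪ (Fx.image (· ∩ A i)) ⊆ F.image (· ∩ A i) :=
          Finset.union_subset (Finset.image_subset_image (Finset.filter_subset _ _))
            (Finset.image_subset_image (Finset.filter_subset _ _))
        have hdisj : Disjoint (F0.image (· ∩ A i)) (Fx.image (· ∩ A i)) := by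
          rw [Finset.disjoint_left]
          intro T hT0 hTx
          obtain ⟨S0, hS0, rfl⟩ := Finset.mem_image.mp hT0
          obtain ⟨Sx, hSx, hTeq⟩ := Finset.mem_image.mp hTx
          have hx0 : x ∉ S0 ∩ A i := fun h =>
            (Finset.mem_filter.mp hS0).2 (Finset.mem_inter.mp h).1
          have hxx : x ∈ Sx ∩ A i :=
            Finset.mem_inter.mpr ⟨(Finset.mem_filter.mp hSx).2, hxA⟩
          rw [hTeq] at hxx
          exact hx0 hxx
        calc (F0.image (· ∩ A i)).card + (Fx.image (· ∩ A i)).card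
            = ((F0.image (· ∩ A i)) ∪ (Fx.image (· ∩ A i))).card :=
              (Finset.card_union_of_disjoint hdisj).symm
          _ ≤ _ := Finset.card_le_card hsub
      -- real-number bookkeeping
      set sx := s.filter (fun i => x ∈ A i) with hsxdef
      have hsxk : k ≤ sx.card := hcov x hx
      set t0 : ι → ℝ := fun i => ((F0.image (· ∩ A i)).card : ℝ) with ht0def
      set t1 : ι → ℝ := fun i => ((F1.image (· ∩ A i)).card : ℝ) with ht1def
      set tF : ι → ℝ := fun i => ((F.image (· ∩ A i)).card : ℝ) with htFdef
      have ht0nn : ∀ i, 0 ≤ t0 i := fun i => by simp only [ht0def]; positivity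
      have ht1nn : ∀ i, 0 ≤ t1 i := fun i => by simp only [ht1def]; positivity
      have htFnn : ∀ i, 0 ≤ tF i := fun i => by simp only [htFdef]; positivity
      set M := ∏ i ∈ s.filter (fun i => ¬ x ∈ A i), tF i with hMdef
      have hMnn : 0 ≤ M := Finset.prod_nonneg fun i _ => htFnn i
      set P := ∏ i ∈ sx, t0 i with hPdef
      set Q := ∏ i ∈ sx, t1 i with hQdef
      have hPnn : 0 ≤ P := Finset.prod_nonneg fun i _ => ht0nn i
      have hQnn : 0 ≤ Q := Finset.prod_nonneg fun i _ => ht1nn i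
      have hprodsplit : ∀ g : ι → ℝ, ∏ i ∈ s, g i
          = (∏ i ∈ sx, g i) * ∏ i ∈ s.filter (fun i => ¬ x ∈ A i), g i := by
        intro g
        rw [hsxdef, Finset.prod_filter_mul_prod_filter_not]
      have h0' : (F0.card : ℝ) ^ k ≤ P * M := by
        refine le_trans h0 ?_
        rw [hprodsplit t0]
        apply mul_le_mul_of_nonneg_left _ hPnn
        apply Finset.prod_le_prod (fun i _ => ht0nn i)
        intro i _
        simp only [ht0def, htFdef]
        exact_mod_cast factA i
      have h1' : (F1.card : ℝ) ^ k ≤ Q * M := by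
        refine le_trans h1 ?_
        rw [hprodsplit t1]
        apply mul_le_mul_of_nonneg_left _ hQnn
        apply Finset.prod_le_prod (fun i _ => ht1nn i)
        intro i _
        calc t1 i ≤ ((Fx.image (· ∩ A i)).card : ℝ) := by
              simp only [ht1def]; exact_mod_cast factB i
          _ ≤ tF i := by
            simp only [htFdef]
            exact_mod_cast Finset.card_le_card
              (Finset.image_subset_image (Finset.filter_subset _ _))
      have hmahler := mahlerIneq sx t0 t1 k hk hsxk
        (fun i _ => ht0nn i) (fun i _ => ht1nn i)
      have hsum_le : ∏ i ∈ sx, (t0 i + t1 i) ≤ ∏ i ∈ sx, tF i := by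
        apply Finset.prod_le_prod (fun i _ => add_nonneg (ht0nn i) (ht1nn i))
        intro i hi
        have hxAi : x ∈ A i := (Finset.mem_filter.mp hi).2
        have hC := factC i hxAi
        have hB := factB i
        have hkey : (F0.image (· ∩ A i)).card + (F1.image (· ∩ A i)).card
            ≤ (F.image (· ∩ A i)).card := by omega
        simp only [ht0def, ht1def, htFdef]
        exact_mod_cast hkey
      have hfinal : (F.card : ℝ) ≤ (∏ i ∈ s, tF i) ^ ((1:ℝ)/k) := by
        have ha0 : (F0.card : ℝ) ≤ (P * M) ^ ((1:ℝ)/k) :=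
          root_le_of_pow_le hk (Nat.cast_nonneg _) h0'
        have ha1 : (F1.card : ℝ) ≤ (Q * M) ^ ((1:ℝ)/k) :=
          root_le_of_pow_le hk (Nat.cast_nonneg _) h1'
        have hcardR : (F.card : ℝ) = (F0.card : ℝ) + (F1.card : ℝ) := by
          rw [hsplit, hF1card]; push_cast; ring
        rw [hcardR]
        calc (F0.card : ℝ) + (F1.card : ℝ) ≤ (P * M) ^ ((1:ℝ)/k) + (Q * M) ^ ((1:ℝ)/k) :=
              add_le_add ha0 ha1
          _ = (P ^ ((1:ℝ)/k) + Q ^ ((1:ℝ)/k)) * M ^ ((1:ℝ)/k) := by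
              rw [Real.mul_rpow hPnn hMnn, Real.mul_rpow hQnn hMnn, add_mul]
          _ ≤ (∏ i ∈ sx, (t0 i + t1 i)) ^ ((1:ℝ)/k) * M ^ ((1:ℝ)/k) :=
              mul_le_mul_of_nonneg_right hmahler (Real.rpow_nonneg hMnn _)
          _ ≤ (∏ i ∈ sx, tF i) ^ ((1:ℝ)/k) * M ^ ((1:ℝ)/k) :=
              mul_le_mul_of_nonneg_right
                (Real.rpow_le_rpow
                  (Finset.prod_nonneg fun i _ => add_nonneg (ht0nn i) (ht1nn i)) hsum_le
                  (by positivity))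
                (Real.rpow_nonneg hMnn _)
          _ = (∏ i ∈ s, tF i) ^ ((1:ℝ)/k) := by
              rw [← Real.mul_rpow (Finset.prod_nonneg fun i _ => htFnn i) hMnn]
              rw [hprodsplit tF]
      calc (F.card : ℝ) ^ k ≤ ((∏ i ∈ s, tF i) ^ ((1:ℝ)/k)) ^ k :=
            pow_le_pow_left₀ (Nat.cast_nonneg _) hfinal k
        _ = ∏ i ∈ s, tF i :=
            pow_root_cancel hk (Finset.prod_nonneg fun i _ => htFnn i)

lemma deg_eq_card {V : Type*} [Fintype V] [DecidableEq V] (G : SimpleGraph V)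
    [DecidableRel G.Adj] (v : V) :
    deg G v = (Finset.univ.filter (fun u => G.Adj v u)).card := by
  rw [deg, ← Set.ncard_coe_finset]
  congr 1
  ext u
  simp

lemma exists_adj_of_connected {V : Type*} (G : SimpleGraph V) (S : Finset V)
    (hcard : 2 ≤ S.card) (hconn : (G.induce (S : Set V)).Connected) {v : V} (hv : v ∈ S) :
    ∃ u ∈ S, G.Adj v u := by
  obtain ⟨w, hw, hwv⟩ := S.exists_mem_ne (by omega) v
  have hreach := hconn.preconnected ⟨v, hv⟩ ⟨w, hw⟩
  obtain ⟨p⟩ := hreach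
  have hne : (⟨v, hv⟩ : (S : Set V)) ≠ ⟨w, hw⟩ := by
    intro h
    exact hwv (congrArg Subtype.val h).symm
  obtain ⟨u, hadj, q, _⟩ :=
    SimpleGraph.Walk.not_nil_iff.mp (SimpleGraph.Walk.not_nil_of_ne hne (p := p))
  exact ⟨u.1, u.2, hadj⟩

theorem stmt11 {V : Type*} [Fintype V] (G : SimpleGraph V) (Δ : ℕ)
    (hdeg : ∀ v, deg G v ≤ Δ) :
    ({S : Finset V | 2 ≤ S.card ∧ (G.induce (S : Set V)).Connected}.ncard : ℝ)
      ≤ (((2 : ℝ) ^ (Δ + 1) - 1) ^ ((1 : ℝ) / ((Δ : ℝ) + 1))) ^ (Fintype.card V) := by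
  classical
  set n := Fintype.card V with hndef
  set F : Finset (Finset V) :=
    Finset.univ.filter (fun S => 2 ≤ S.card ∧ (G.induce (S : Set V)).Connected) with hFdef
  have hncard : {S : Finset V | 2 ≤ S.card ∧ (G.induce (S : Set V)).Connected}.ncard
      = F.card := by
    rw [← Set.ncard_coe_finset]
    congr 1
    ext S
    simp [hFdef]
  set d : V → ℕ := fun v => deg G v with hddef
  set Nv : V → Finset V := fun v => insert v (Finset.univ.filter (fun u => G.Adj v u))
    with hNvdef
  have hmemNv : ∀ v u, u ∈ Nv v ↔ (u = v ∨ G.Adj v u) := by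
    intro v u
    simp [hNvdef]
  have hNvcard : ∀ v, (Nv v).card = d v + 1 := by
    intro v
    rw [hNvdef]
    rw [Finset.card_insert_of_notMem (by simp)]
    simp only [hddef]
    rw [deg_eq_card]
  set k := Δ + 1 with hkdef
  set A : V × ℕ → Finset V :=
    fun p => if p.2 = 0 then Nv p.1 else if p.2 ≤ Δ - d p.1 then {p.1} else ∅ with hAdef
  set s : Finset (V × ℕ) := Finset.univ ×ˢ Finset.range (Δ + 1) with hsdef
  -- coverage
  have hcov : ∀ x ∈ (Finset.univ : Finset V), k ≤ (s.filter fun i => x ∈ A i).card := by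
    intro x _
    have hdx : d x ≤ Δ := hdeg x
    set T1 := (Nv x) ×ˢ ({0} : Finset ℕ) with hT1def
    set T2 := ({x} : Finset V) ×ˢ (Finset.Icc 1 (Δ - d x)) with hT2def
    have hsub : T1 ∪ T2 ⊆ s.filter fun i => x ∈ A i := by
      intro p hp
      rcases Finset.mem_union.mp hp with hp | hp
      · obtain ⟨hp1, hp2⟩ := Finset.mem_product.mp hp
        have hp2' : p.2 = 0 := Finset.mem_singleton.mp hp2
        refine Finset.mem_filter.mpr ⟨Finset.mem_product.mpr
          ⟨Finset.mem_univ _, Finset.mem_range.mpr (by omega)⟩, ?_⟩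
        rw [hAdef]
        simp only [hp2', if_pos rfl]
        rcases (hmemNv x p.1).mp hp1 with h | h
        · rw [h]
          exact (hmemNv x x).mpr (Or.inl rfl)
        · exact (hmemNv p.1 x).mpr (Or.inr h.symm)
      · obtain ⟨hp1, hp2⟩ := Finset.mem_product.mp hp
        have hp1' : p.1 = x := Finset.mem_singleton.mp hp1
        obtain ⟨h1, h2⟩ := Finset.mem_Icc.mp hp2
        refine Finset.mem_filter.mpr ⟨Finset.mem_product.mpr
          ⟨Finset.mem_univ _, Finset.mem_range.mpr (by omega)⟩, ?_⟩
        rw [hAdef]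
        simp only [hp1']
        rw [if_neg (by omega), if_pos (by omega)]
        exact Finset.mem_singleton_self x
    have hdisj : Disjoint T1 T2 := by
      rw [Finset.disjoint_left]
      intro p hp1 hp2
      have h1 : p.2 = 0 := Finset.mem_singleton.mp (Finset.mem_product.mp hp1).2
      have h2 := Finset.mem_Icc.mp (Finset.mem_product.mp hp2).2
      omega
    have hcard : (T1 ∪ T2).card = (d x + 1) + (Δ - d x) := by
      rw [Finset.card_union_of_disjoint hdisj, hT1def, hT2def,
        Finset.card_product, Finset.card_product, hNvcard]
      simp [Nat.card_Icc]
    calc k ≤ (d x + 1) + (Δ - d x) := by omega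
      _ = (T1 ∪ T2).card := hcard.symm
      _ ≤ _ := Finset.card_le_card hsub
  -- Shearer
  have hFU : ∀ S ∈ F, S ⊆ Finset.univ := fun S _ => S.subset_univ
  have hshearer := shearer k (by omega) s A Finset.univ F hFU hcov
  -- trace bounds
  have hEmpty : ((F.image (· ∩ (∅ : Finset V))).card : ℝ) ≤ 1 := by
    have hsub : F.image (· ∩ (∅ : Finset V)) ⊆ {∅} := by
      intro T hT
      obtain ⟨S, _, rfl⟩ := Finset.mem_image.mp hT
      simp
    have := Finset.card_le_card hsub
    simp only [Finset.card_singleton] at this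
    exact_mod_cast this
  have hSingle : ∀ v, ((F.image (· ∩ ({v} : Finset V))).card : ℝ) ≤ 2 := by
    intro v
    have hsub : F.image (· ∩ ({v} : Finset V)) ⊆ ({v} : Finset V).powerset :=
      fun T hT => by
        obtain ⟨S, _, rfl⟩ := Finset.mem_image.mp hT
        exact Finset.mem_powerset.mpr Finset.inter_subset_right
    have := Finset.card_le_card hsub
    rw [Finset.card_powerset, Finset.card_singleton] at this
    exact_mod_cast this
  have hNvtrace : ∀ v, ((F.image (· ∩ Nv v)).card : ℝ) ≤ 2 ^ (d v + 1) - 1 := by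
    intro v
    have hsub : F.image (· ∩ Nv v) ⊆ ((Nv v).powerset).erase {v} := by
      intro T hT
      obtain ⟨S, hS, rfl⟩ := Finset.mem_image.mp hT
      obtain ⟨hcard2, hconn⟩ := (Finset.mem_filter.mp hS).2
      refine Finset.mem_erase.mpr ⟨?_, Finset.mem_powerset.mpr Finset.inter_subset_right⟩
      intro heq
      have hvS : v ∈ S := by
        have : v ∈ S ∩ Nv v := heq ▸ Finset.mem_singleton_self v
        exact (Finset.mem_inter.mp this).1
      obtain ⟨u, huS, hadj⟩ := exists_adj_of_connected G S hcard2 hconn hvS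
      have huT : u ∈ S ∩ Nv v :=
        Finset.mem_inter.mpr ⟨huS, (hmemNv v u).mpr (Or.inr hadj)⟩
      rw [heq, Finset.mem_singleton] at huT
      exact G.loopless.irrefl v (huT ▸ hadj)
    have h1 : (F.image (· ∩ Nv v)).card ≤ 2 ^ (d v + 1) - 1 := by
      have := Finset.card_le_card hsub
      rwa [Finset.card_erase_of_mem
        (Finset.mem_powerset.mpr (Finset.singleton_subset_iff.mpr
          ((hmemNv v v).mpr (Or.inl rfl)))),
        Finset.card_powerset, hNvcard] at this
    have h2 : (1:ℕ) ≤ 2 ^ (d v + 1) := Nat.one_le_two_pow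
    have := (Nat.cast_le (α := ℝ)).mpr h1
    rwa [Nat.cast_sub h2, Nat.cast_pow, Nat.cast_ofNat, Nat.cast_one] at this
  -- product bound
  have hprodbound : ∏ i ∈ s, ((F.image (· ∩ A i)).card : ℝ)
      ≤ ((2:ℝ) ^ (Δ + 1) - 1) ^ n := by
    rw [hsdef, Finset.prod_product]
    have hinner : ∀ v, ∏ j ∈ Finset.range (Δ + 1), ((F.image (· ∩ A (v, j))).card : ℝ)
        ≤ (2:ℝ) ^ (Δ + 1) - 1 := by
      intro v
      have hdv : d v ≤ Δ := hdeg v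
      rw [Finset.prod_range_succ']
      have hA0 : A (v, 0) = Nv v := by simp [hAdef]
      have hAj : ∀ j : ℕ, A (v, j + 1) = if j + 1 ≤ Δ - d v then ({v} : Finset V) else ∅ := by
        intro j
        simp [hAdef]
      have hshift : ∏ j ∈ Finset.range Δ, ((F.image (· ∩ A (v, j + 1))).card : ℝ)
          ≤ (2:ℝ) ^ (Δ - d v) := by
        calc ∏ j ∈ Finset.range Δ, ((F.image (· ∩ A (v, j + 1))).card : ℝ)
            ≤ ∏ j ∈ Finset.range Δ, (if j + 1 ≤ Δ - d v then (2:ℝ) else 1) := by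
              apply Finset.prod_le_prod (fun j _ => by positivity)
              intro j _
              rw [hAj j]
              split_ifs with h
              · exact hSingle v
              · exact hEmpty
          _ = (2:ℝ) ^ (Δ - d v) := by
              rw [Finset.prod_ite]
              rw [Finset.prod_const, Finset.prod_const, one_pow, mul_one]
              congr 1
              have : (Finset.range Δ).filter (fun j => j + 1 ≤ Δ - d v)
                  = Finset.range (Δ - d v) := by
                ext j
                simp only [Finset.mem_filter, Finset.mem_range]
                omega
              rw [this, Finset.card_range]
      calc (∏ j ∈ Finset.range Δ, ((F.image (· ∩ A (v, j + 1))).card : ℝ))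
            * ((F.image (· ∩ A (v, 0))).card : ℝ)
          ≤ (2:ℝ) ^ (Δ - d v) * ((2:ℝ) ^ (d v + 1) - 1) := by
            apply mul_le_mul hshift (by rw [hA0]; exact hNvtrace v) (by positivity)
              (by positivity)
        _ ≤ (2:ℝ) ^ (Δ + 1) - 1 := by
            have hsplit : (2:ℝ) ^ (Δ - d v) * (2:ℝ) ^ (d v + 1) = (2:ℝ) ^ (Δ + 1) := by
              rw [← pow_add]
              congr 1
              omega
            have h1 : (1:ℝ) ≤ (2:ℝ) ^ (Δ - d v) := one_le_pow₀ (by norm_num)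
            nlinarith
    have hBnn : (0:ℝ) ≤ (2:ℝ) ^ (Δ + 1) - 1 := by
      have : (1:ℝ) ≤ (2:ℝ) ^ (Δ + 1) := one_le_pow₀ (by norm_num)
      linarith
    calc ∏ v : V, ∏ j ∈ Finset.range (Δ + 1), ((F.image (· ∩ A (v, j))).card : ℝ)
        ≤ ∏ _v : V, ((2:ℝ) ^ (Δ + 1) - 1) :=
          Finset.prod_le_prod (fun v _ => Finset.prod_nonneg fun j _ => by positivity)
            (fun v _ => hinner v)
      _ = ((2:ℝ) ^ (Δ + 1) - 1) ^ n := by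
          rw [Finset.prod_const, Finset.card_univ]
  -- conclude
  have hkey : (F.card : ℝ) ^ k ≤ ((2:ℝ) ^ (Δ + 1) - 1) ^ n := le_trans hshearer hprodbound
  rw [hncard]
  have hBnn : (0:ℝ) ≤ (2:ℝ) ^ (Δ + 1) - 1 := by
    have : (1:ℝ) ≤ (2:ℝ) ^ (Δ + 1) := one_le_pow₀ (by norm_num)
    linarith
  set B := (2:ℝ) ^ (Δ + 1) - 1 with hBdef
  set β := B ^ ((1:ℝ) / ((Δ:ℝ) + 1)) with hβdef
  have hβnn : 0 ≤ β := Real.rpow_nonneg hBnn _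
  have hexp : ((Δ:ℝ) + 1) = ((k : ℕ) : ℝ) := by
    rw [hkdef]
    push_cast
    ring
  have hβk : β ^ k = B := by
    rw [hβdef, hexp]
    exact pow_root_cancel (by omega) hBnn
  have hRHSpow : (β ^ n) ^ k = B ^ n := by
    rw [← pow_mul, mul_comm, pow_mul, hβk]
  refine (pow_le_pow_iff_left₀ (n := k) (Nat.cast_nonneg _) (pow_nonneg hβnn n)
    (Nat.succ_ne_zero Δ)).mp ?_
  rw [hRHSpow]
  exact hkey
end

section
/- ConsDeg2 soundness: Let G be a connected graph with consecutive degree-2 vertices: edges {v,w} and {w,z} with d_G(w) = d_G(z) = 2 and v ≠ z. Let G' be obtained by deleting w together with its edges and adding edge {v,z} (suppressing w). Then the maximum number of internal vertices over spanning trees of G equals one plus the maximum number of internal vertices over spanning trees of G'. -/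
open SimpleGraph

private lemma deg_def {V : Type*} (T : SimpleGraph V) (v : V) :
    deg T v = {u | T.Adj v u}.ncard := rfl
private lemma internalCount_def {V : Type*} (T : SimpleGraph V) :
    internalCount T = {v | 2 ≤ deg T v}.ncard := rfl

private lemma reach_map {α β : Type*} {G : SimpleGraph α} {H : SimpleGraph β} (f : α → β)
    (h : ∀ a b, G.Adj a b → H.Reachable (f a) (f b)) {a b : α} (hr : G.Reachable a b) :
    H.Reachable (f a) (f b) := by
  obtain ⟨p⟩ := hr
  induction p with
  | nil => exact Reachable.refl _
  | cons ha _ ih => exact (h _ _ ha).trans ih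

private lemma exists_adj' {α : Type*} {T : SimpleGraph α} (hT : T.Connected) {x y : α}
    (hxy : x ≠ y) : ∃ u, T.Adj x u := by
  obtain ⟨p⟩ := hT.preconnected x y
  cases p with
  | nil => exact absurd rfl hxy
  | cons ha _ => exact ⟨_, ha⟩

private lemma exists_spanning_tree {α : Type*} [Fintype α] :
    ∀ (n : ℕ) (G : SimpleGraph α), G.edgeSet.ncard = n → G.Connected → ∃ T ≤ G, T.IsTree := by
  intro n
  induction n using Nat.strong_induction_on with
  | _ n ih =>
    intro G hn hG
    by_cases hac : G.IsAcyclic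
    · exact ⟨G, le_rfl, hG, hac⟩
    · rw [IsAcyclic] at hac
      push_neg at hac
      obtain ⟨x, c, hc⟩ := hac
      cases c with
      | nil => exact absurd hc (by simp [Walk.isCycle_def])
      | @cons _ y _ ha p =>
        have hmem : s(x, y) ∈ (Walk.cons ha p).edges := by simp
        have hreach : (G \ fromEdgeSet {s(x, y)}).Reachable x y :=
          (adj_and_reachable_delete_edges_iff_exists_cycle.2 ⟨x, _, hc, hmem⟩).2
        set G₂ := G \ fromEdgeSet {s(x, y)} with hG₂
        have hle : G₂ ≤ G := sdiff_le
        have hconn : G₂.Connected := by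
          have : Nonempty α := hG.nonempty
          refine Connected.mk fun a b => ?_
          refine reach_map (id) (fun a b hab => ?_) (hG.preconnected a b)
          by_cases he : s(a, b) = s(x, y)
          · rw [Sym2.eq_iff] at he
            rcases he with ⟨rfl, rfl⟩ | ⟨rfl, rfl⟩
            · exact hreach
            · exact hreach.symm
          · exact Reachable.refl _ |>.trans (Adj.reachable (by
              rw [hG₂, sdiff_adj, fromEdgeSet_adj]
              exact ⟨hab, fun hh => he hh.1⟩))
        have hE : G₂.edgeSet = G.edgeSet \ {s(x, y)} := by
          ext e
          induction e with
          | _ a b =>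
            simp only [hG₂, mem_edgeSet, sdiff_adj, fromEdgeSet_adj, Set.mem_diff,
              Set.mem_singleton_iff]
            constructor
            · rintro ⟨h1, h2⟩
              exact ⟨h1, fun hh => h2 ⟨hh, h1.ne⟩⟩
            · rintro ⟨h1, h2⟩
              exact ⟨h1, fun hh => h2 hh.1⟩
        have hxyE : s(x, y) ∈ G.edgeSet := ha
        have hlt : G₂.edgeSet.ncard < n := by
          rw [hE, Set.ncard_sdiff_singleton_of_mem hxyE, hn]
          have : 0 < n := by
            rw [← hn]
            exact Set.ncard_pos (Set.toFinite _) |>.2 ⟨_, hxyE⟩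
          omega
        obtain ⟨T, hTle, hT⟩ := ih _ hlt G₂ rfl hconn
        exact ⟨T, hTle.trans hle, hT⟩

private lemma edgeSet_ncard {α : Type*} [Fintype α] {T : SimpleGraph α}
    (hT : T.IsTree) : T.edgeSet.ncard + 1 = Fintype.card α := by
  classical
  letI : Fintype T.edgeSet := Set.Finite.fintype (Set.toFinite _)
  rw [Set.ncard_eq_toFinset_card']
  have := hT.card_edgeFinset
  rwa [Set.toFinset_card, ← Set.toFinset_card, ← edgeFinset]

private lemma isTree_of_card {α : Type*} [Fintype α] {G : SimpleGraph α}
    (hG : G.Connected) (hcard : G.edgeSet.ncard + 1 = Fintype.card α) : G.IsTree := by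
  obtain ⟨T, hle, hT⟩ := exists_spanning_tree _ G rfl hG
  have h1 : T.edgeSet.ncard + 1 = Fintype.card α := edgeSet_ncard hT
  have h2 : T.edgeSet ⊆ G.edgeSet := edgeSet_subset_edgeSet.2 hle
  have h3 : T.edgeSet = G.edgeSet :=
    Set.eq_of_subset_of_ncard_le h2 (by omega) (Set.toFinite _)
  rwa [← edgeSet_inj.1 h3]

private lemma mem_sym2_image {α : Type*} {p : α → Prop} {U : SimpleGraph {x // p x}} {a b : α} :
    s(a, b) ∈ Sym2.map Subtype.val '' U.edgeSet ↔
      ∃ (ha : p a) (hb : p b), U.Adj ⟨a, ha⟩ ⟨b, hb⟩ := by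
  constructor
  · rintro ⟨e, he, hmap⟩
    induction e with
    | _ x y =>
      rw [Sym2.map_pair_eq, Sym2.eq_iff] at hmap
      rcases hmap with ⟨h1, h2⟩ | ⟨h1, h2⟩
      · subst h1; subst h2; exact ⟨x.2, y.2, he⟩
      · subst h1; subst h2; exact ⟨y.2, x.2, U.adj_symm he⟩
  · rintro ⟨ha, hb, hadj⟩
    exact ⟨s(⟨a, ha⟩, ⟨b, hb⟩), hadj, by rw [Sym2.map_pair_eq]⟩

private lemma sym2_val_inj {α : Type*} {p : α → Prop} :
    Function.Injective (Sym2.map (Subtype.val : {x // p x} → α)) :=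
  Sym2.map.injective Subtype.val_injective

private lemma card_ne {α : Type*} [Fintype α] [DecidableEq α] (w : α) :
    Fintype.card {x : α // x ≠ w} = Fintype.card α - 1 := by
  have := Fintype.card_subtype_compl (fun x : α => x = w)
  simp only [Fintype.card_subtype_eq] at this
  convert this using 2


section Main
variable {V : Type*} [Fintype V] [DecidableEq V] {G : SimpleGraph V} {v w z : V}

private lemma dir2_leaf (hvw : G.Adj v w) (hwz : G.Adj w z)
    (T : SimpleGraph V) (hT : IsSpanningTree G T) (c : V) (hcw : c ≠ w)
    (hNTw : {u | T.Adj w u} = {c}) :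
    ∃ T' : SimpleGraph {x : V // x ≠ w},
      IsSpanningTree (SimpleGraph.fromRel
        (fun a b : {x : V // x ≠ w} => G.Adj a.1 b.1 ∨ (a.1 = v ∧ b.1 = z))) T' ∧
      internalCount T ≤ internalCount T' + 1 := by
  set V' := {x : V // x ≠ w}
  set T' : SimpleGraph V' := SimpleGraph.comap Subtype.val T with hT'def
  have hTwc : T.Adj w c := by
    have : c ∈ ({c} : Set V) := rfl
    rw [← hNTw] at this
    exact this
  -- (1) T' ≤ G'
  have hle : T' ≤ SimpleGraph.fromRel
      (fun a b : V' => G.Adj a.1 b.1 ∨ (a.1 = v ∧ b.1 = z)) := by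
    intro a b hab
    rw [comap_adj] at hab
    rw [fromRel_adj]
    exact ⟨fun h => hab.ne (congrArg Subtype.val h), Or.inl (Or.inl (hT.1 hab))⟩
  -- (2) edge set
  have hE : Sym2.map Subtype.val '' T'.edgeSet = T.edgeSet \ {s(w, c)} := by
    ext e
    induction e with
    | _ a b =>
      rw [mem_sym2_image]
      simp only [Set.mem_diff, mem_edgeSet, Set.mem_singleton_iff, hT'def, comap_adj]
      constructor
      · rintro ⟨ha, hb, hadj⟩
        refine ⟨hadj, fun hh => ?_⟩
        rw [Sym2.eq_iff] at hh
        rcases hh with ⟨rfl, rfl⟩ | ⟨rfl, rfl⟩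
        · exact ha rfl
        · exact hb rfl
      · rintro ⟨hadj, hne⟩
        have ha : a ≠ w := by
          intro haw
          have h1 : b ∈ {u | T.Adj w u} := by rw [← haw]; exact hadj
          rw [hNTw, Set.mem_singleton_iff] at h1
          exact hne (by rw [haw, h1])
        have hb : b ≠ w := by
          intro hbw
          have h1 : a ∈ {u | T.Adj w u} := by rw [← hbw]; exact hadj.symm
          rw [hNTw, Set.mem_singleton_iff] at h1
          exact hne (by rw [hbw, h1, Sym2.eq_swap])
        exact ⟨ha, hb, hadj⟩
  -- (3) edge count
  have hcardV' : Fintype.card V' = Fintype.card V - 1 := card_ne w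
  have hTE : T.edgeSet.ncard + 1 = Fintype.card V := edgeSet_ncard hT.2
  have hE' : T'.edgeSet.ncard + 1 = Fintype.card V' := by
    have h1 : (Sym2.map Subtype.val '' T'.edgeSet).ncard = T'.edgeSet.ncard :=
      Set.ncard_image_of_injective _ sym2_val_inj
    have h2 : (T.edgeSet \ {s(w, c)}).ncard = T.edgeSet.ncard - 1 :=
      Set.ncard_sdiff_singleton_of_mem (by exact hTwc)
    have h3 : 0 < T.edgeSet.ncard := Set.ncard_pos (Set.toFinite _) |>.2 ⟨s(w, c), hTwc⟩
    rw [← h1, hE, h2, hcardV']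
    omega
  -- (4) connected
  have hconn : T'.Connected := by
    have : Nonempty V' := ⟨⟨v, hvw.ne⟩⟩
    refine Connected.mk fun a b => ?_
    set f : V → V' := fun x => if hx : x = w then ⟨c, hcw⟩ else ⟨x, hx⟩ with hf
    have hfne : ∀ (x : V) (hx : x ≠ w), f x = ⟨x, hx⟩ := fun x hx => dif_neg hx
    have hstep : ∀ x y, T.Adj x y → T'.Reachable (f x) (f y) := by
      intro x y hxy
      by_cases hx : x = w
      · subst hx
        have : y ∈ {u | T.Adj x u} := hxy
        rw [hNTw] at this
        rw [this, hfne c hcw, hf]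
        simp only [dif_pos rfl]
        exact Reachable.refl _
      · by_cases hy : y = w
        · subst hy
          have : x ∈ {u | T.Adj y u} := hxy.symm
          rw [hNTw] at this
          rw [this, hfne c hcw, hf]
          simp only [dif_pos rfl]
          exact Reachable.refl _
        · rw [hfne x hx, hfne y hy]
          exact Adj.reachable (by rw [hT'def, comap_adj]; exact hxy)
    have := reach_map f hstep (hT.2.isConnected.preconnected a.1 b.1)
    rwa [hfne a.1 a.2, hfne b.1 b.2, Subtype.coe_eta, Subtype.coe_eta] at this
  have htree : T'.IsTree := isTree_of_card hconn hE'
  -- (6) degree preservation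
  have hdeg : ∀ (x : V) (hx : x ≠ w), x ≠ c → deg T x = deg T' ⟨x, hx⟩ := by
    intro x hx hxc
    rw [deg_def, deg_def]
    have : {u | T.Adj x u} = Subtype.val '' {u : V' | T'.Adj ⟨x, hx⟩ u} := by
      ext u
      constructor
      · intro hu
        have hu' : u ≠ w := by
          intro huw
          have h1 : x ∈ {u | T.Adj w u} := by rw [← huw]; exact hu.symm
          rw [hNTw, Set.mem_singleton_iff] at h1
          exact hxc h1
        exact ⟨⟨u, hu'⟩, by rw [Set.mem_setOf_eq, hT'def, comap_adj]; exact hu, rfl⟩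
      · rintro ⟨b, hb, rfl⟩
        rw [Set.mem_setOf_eq, hT'def, comap_adj] at hb
        exact hb
    rw [this, Set.ncard_image_of_injective _ Subtype.val_injective]
  -- (7) conclusion
  have hsub : {x : V | 2 ≤ deg T x} ⊆
      insert c (Subtype.val '' {y : V' | 2 ≤ deg T' y}) := by
    intro x hx
    have hxw : x ≠ w := by
      intro hxw
      have hx2 : 2 ≤ deg T x := hx
      rw [hxw, deg_def, hNTw, Set.ncard_singleton] at hx2
      omega
    by_cases hxc : x = c
    · exact Or.inl hxc
    · exact Or.inr ⟨⟨x, hxw⟩, by rw [Set.mem_setOf_eq, ← hdeg x hxw hxc]; exact hx, rfl⟩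
  refine ⟨T', ⟨hle, htree⟩, ?_⟩
  calc internalCount T ≤ (insert c (Subtype.val '' {y : V' | 2 ≤ deg T' y})).ncard :=
        Set.ncard_le_ncard hsub (Set.toFinite _)
    _ ≤ (Subtype.val '' {y : V' | 2 ≤ deg T' y}).ncard + 1 := Set.ncard_insert_le _ _
    _ = internalCount T' + 1 := by
        rw [Set.ncard_image_of_injective _ Subtype.val_injective, internalCount_def]

private lemma dir2_two (h4 : 4 ≤ Fintype.card V)
    (hvw : G.Adj v w) (hwz : G.Adj w z) (hvz : v ≠ z) (hnadj : ¬ G.Adj v z)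
    (T : SimpleGraph V) (hT : IsSpanningTree G T)
    (hNTw : {u | T.Adj w u} = {v, z}) :
    ∃ T' : SimpleGraph {x : V // x ≠ w},
      IsSpanningTree (SimpleGraph.fromRel
        (fun a b : {x : V // x ≠ w} => G.Adj a.1 b.1 ∨ (a.1 = v ∧ b.1 = z))) T' ∧
      internalCount T ≤ internalCount T' + 1 := by
  set V' := {x : V // x ≠ w}
  have hTwv : T.Adj w v := by
    have : v ∈ ({v, z} : Set V) := Set.mem_insert _ _
    rw [← hNTw] at this; exact this
  have hTwz : T.Adj w z := by
    have : z ∈ ({v, z} : Set V) := Set.mem_insert_iff.2 (Or.inr rfl)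
    rw [← hNTw] at this; exact this
  have hTvz : ¬ T.Adj v z := fun h => hnadj (hT.1 h)
  have hv' : v ≠ w := hvw.ne
  have hz' : z ≠ w := hwz.ne'
  set T' : SimpleGraph V' :=
    { Adj := fun a b => T.Adj a.1 b.1 ∨ s(a.1, b.1) = s(v, z)
      symm := by
        refine ⟨?_⟩; rintro a b (h | h)
        · exact Or.inl h.symm
        · exact Or.inr (by rw [Sym2.eq_swap]; exact h)
      loopless := by
        refine ⟨?_⟩; rintro a (h | h)
        · exact T.irrefl h
        · rw [Sym2.eq_iff] at h
          rcases h with ⟨h1, h2⟩ | ⟨h1, h2⟩ <;> exact hvz (h1 ▸ h2 ▸ rfl) } with hT'def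
  -- T' ≤ G'
  have hle : T' ≤ SimpleGraph.fromRel
      (fun a b : V' => G.Adj a.1 b.1 ∨ (a.1 = v ∧ b.1 = z)) := by
    rintro a b (h | h)
    · rw [fromRel_adj]
      exact ⟨fun hh => h.ne (congrArg Subtype.val hh), Or.inl (Or.inl (hT.1 h))⟩
    · rw [fromRel_adj]
      rw [Sym2.eq_iff] at h
      have hab : a ≠ b := by
        rcases h with ⟨h1, h2⟩ | ⟨h1, h2⟩ <;>
          exact fun hh => hvz (by rw [← h1, ← h2, hh])
      rcases h with ⟨h1, h2⟩ | ⟨h1, h2⟩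
      · exact ⟨hab, Or.inl (Or.inr ⟨h1, h2⟩)⟩
      · exact ⟨hab, Or.inr (Or.inr ⟨h2, h1⟩)⟩
  -- edge set
  have hE : Sym2.map Subtype.val '' T'.edgeSet =
      insert s(v, z) ((T.edgeSet \ {s(v, w)}) \ {s(w, z)}) := by
    ext e
    induction e with
    | _ a b =>
      rw [mem_sym2_image]
      simp only [Set.mem_insert_iff, Set.mem_diff, mem_edgeSet, Set.mem_singleton_iff]
      constructor
      · rintro ⟨ha, hb, (hadj | hpair)⟩
        · refine Or.inr ⟨⟨hadj, fun hh => ?_⟩, fun hh => ?_⟩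
          · rw [Sym2.eq_iff] at hh
            rcases hh with ⟨rfl, rfl⟩ | ⟨rfl, rfl⟩
            · exact hb rfl
            · exact ha rfl
          · rw [Sym2.eq_iff] at hh
            rcases hh with ⟨rfl, rfl⟩ | ⟨rfl, rfl⟩
            · exact ha rfl
            · exact hb rfl
        · exact Or.inl hpair
      · rintro (hpair | ⟨⟨hadj, hne1⟩, hne2⟩)
        · rw [Sym2.eq_iff] at hpair
          rcases hpair with ⟨rfl, rfl⟩ | ⟨rfl, rfl⟩
          · exact ⟨hv', hz', Or.inr rfl⟩
          · exact ⟨hz', hv', Or.inr (Sym2.eq_swap)⟩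
        · have ha : a ≠ w := by
            intro haw
            have h1 : b ∈ {u | T.Adj w u} := by rw [← haw]; exact hadj
            rw [hNTw] at h1
            simp only [Set.mem_insert_iff, Set.mem_singleton_iff] at h1
            rcases h1 with rfl | rfl
            · exact hne1 (by rw [haw, Sym2.eq_swap])
            · exact hne2 (by rw [haw])
          have hb : b ≠ w := by
            intro hbw
            have h1 : a ∈ {u | T.Adj w u} := by rw [← hbw]; exact hadj.symm
            rw [hNTw] at h1
            simp only [Set.mem_insert_iff, Set.mem_singleton_iff] at h1
            rcases h1 with rfl | rfl
            · exact hne1 (by rw [hbw])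
            · exact hne2 (by rw [hbw, Sym2.eq_swap])
          exact ⟨ha, hb, Or.inl hadj⟩
  -- edge count
  have hcardV' : Fintype.card V' = Fintype.card V - 1 := card_ne w
  have hTE : T.edgeSet.ncard + 1 = Fintype.card V := edgeSet_ncard hT.2
  have hE' : T'.edgeSet.ncard + 1 = Fintype.card V' := by
    have h1 : (Sym2.map Subtype.val '' T'.edgeSet).ncard = T'.edgeSet.ncard :=
      Set.ncard_image_of_injective _ sym2_val_inj
    have hvwE : s(v, w) ∈ T.edgeSet := hTwv.symm
    have hwzE : s(w, z) ∈ (T.edgeSet \ {s(v, w)}) := by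
      refine ⟨hTwz, fun hh => ?_⟩
      rw [Set.mem_singleton_iff, Sym2.eq_iff] at hh
      rcases hh with ⟨h1, h2⟩ | ⟨h1, h2⟩
      · exact hv' h1.symm
      · exact hvz h2.symm
    have hvznE : s(v, z) ∉ ((T.edgeSet \ {s(v, w)}) \ {s(w, z)}) := by
      rintro ⟨⟨hh, _⟩, _⟩
      exact hTvz hh
    have c1 : (T.edgeSet \ {s(v, w)}).ncard = T.edgeSet.ncard - 1 :=
      Set.ncard_sdiff_singleton_of_mem hvwE
    have c2 : ((T.edgeSet \ {s(v, w)}) \ {s(w, z)}).ncard = (T.edgeSet \ {s(v, w)}).ncard - 1 :=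
      Set.ncard_sdiff_singleton_of_mem hwzE
    have c3 : (insert s(v, z) ((T.edgeSet \ {s(v, w)}) \ {s(w, z)})).ncard =
        ((T.edgeSet \ {s(v, w)}) \ {s(w, z)}).ncard + 1 :=
      Set.ncard_insert_of_notMem hvznE (Set.toFinite _)
    have p1 : 0 < T.edgeSet.ncard := Set.ncard_pos (Set.toFinite _) |>.2 ⟨s(v, w), hvwE⟩
    have p2 : 0 < (T.edgeSet \ {s(v, w)}).ncard :=
      Set.ncard_pos (Set.toFinite _) |>.2 ⟨s(w, z), hwzE⟩
    rw [← h1, hE, c3, c2, c1, hcardV']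
    omega
  -- connectivity
  have hconn : T'.Connected := by
    have : Nonempty V' := ⟨⟨v, hv'⟩⟩
    refine Connected.mk fun a b => ?_
    set f : V → V' := fun x => if hx : x = w then ⟨v, hv'⟩ else ⟨x, hx⟩ with hf
    have hfne : ∀ (x : V) (hx : x ≠ w), f x = ⟨x, hx⟩ := fun x hx => dif_neg hx
    have hvzadj : T'.Adj ⟨v, hv'⟩ ⟨z, hz'⟩ := Or.inr rfl
    have hw2 : ∀ y, T.Adj w y → T'.Reachable (f w) (f y) := by
      intro y hy
      have h1 : y ∈ {u | T.Adj w u} := hy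
      rw [hNTw] at h1
      simp only [Set.mem_insert_iff, Set.mem_singleton_iff] at h1
      have hfw : f w = ⟨v, hv'⟩ := dif_pos rfl
      rcases h1 with rfl | rfl
      · rw [hfw, hfne y hv']
      · rw [hfw, hfne y hz']
        exact hvzadj.reachable
    have hstep : ∀ x y, T.Adj x y → T'.Reachable (f x) (f y) := by
      intro x y hxy
      by_cases hx : x = w
      · subst hx; exact hw2 y hxy
      · by_cases hy : y = w
        · subst hy; exact (hw2 x hxy.symm).symm
        · rw [hfne x hx, hfne y hy]
          exact Adj.reachable (Or.inl hxy)
    have := reach_map f hstep (hT.2.isConnected.preconnected a.1 b.1)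
    rwa [hfne a.1 a.2, hfne b.1 b.2, Subtype.coe_eta, Subtype.coe_eta] at this
  have htree : T'.IsTree := isTree_of_card hconn hE'
  -- degrees
  have hdeg : ∀ x : V', deg T' x = deg T x.1 := by
    intro x
    rw [deg_def, deg_def]
    rcases eq_or_ne x.1 v with hxv | hxv
    · have himg : Subtype.val '' {u : V' | T'.Adj x u} = insert z ({u | T.Adj v u} \ {w}) := by
        ext u
        simp only [Set.mem_image, Set.mem_setOf_eq, Set.mem_insert_iff, Set.mem_diff,
          Set.mem_singleton_iff]
        constructor
        · rintro ⟨b, (hadj | hpair), rfl⟩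
          · exact Or.inr ⟨by rw [← hxv]; exact hadj, b.2⟩
          · rw [hxv, Sym2.eq_iff] at hpair
            rcases hpair with ⟨h1, h2⟩ | ⟨h1, h2⟩
            · exact Or.inl h2
            · exact absurd h1 hvz
        · rintro (rfl | ⟨hadj, hne⟩)
          · exact ⟨⟨u, hz'⟩, Or.inr (by rw [hxv]), rfl⟩
          · exact ⟨⟨u, hne⟩, Or.inl (by rw [hxv]; exact hadj), rfl⟩
      have h1 : ({u | T.Adj v u} \ {w}).ncard = {u | T.Adj v u}.ncard - 1 :=
        Set.ncard_sdiff_singleton_of_mem hTwv.symm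
      have h2 : z ∉ ({u | T.Adj v u} \ {w}) := fun hh => hTvz hh.1
      have h3 : 0 < {u | T.Adj v u}.ncard :=
        Set.ncard_pos (Set.toFinite _) |>.2 ⟨w, hTwv.symm⟩
      rw [← Set.ncard_image_of_injective {u : V' | T'.Adj x u} Subtype.val_injective, himg,
        Set.ncard_insert_of_notMem h2 (Set.toFinite _), h1, hxv]
      omega
    · rcases eq_or_ne x.1 z with hxz | hxz
      · have himg : Subtype.val '' {u : V' | T'.Adj x u} = insert v ({u | T.Adj z u} \ {w}) := by
          ext u
          simp only [Set.mem_image, Set.mem_setOf_eq, Set.mem_insert_iff, Set.mem_diff,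
            Set.mem_singleton_iff]
          constructor
          · rintro ⟨b, (hadj | hpair), rfl⟩
            · exact Or.inr ⟨by rw [← hxz]; exact hadj, b.2⟩
            · rw [hxz, Sym2.eq_iff] at hpair
              rcases hpair with ⟨h1, h2⟩ | ⟨h1, h2⟩
              · exact absurd h1.symm hvz
              · exact Or.inl h2
          · rintro (rfl | ⟨hadj, hne⟩)
            · exact ⟨⟨u, hv'⟩, Or.inr (by rw [hxz, Sym2.eq_swap]), rfl⟩
            · exact ⟨⟨u, hne⟩, Or.inl (by rw [hxz]; exact hadj), rfl⟩
        have h1 : ({u | T.Adj z u} \ {w}).ncard = {u | T.Adj z u}.ncard - 1 :=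
          Set.ncard_sdiff_singleton_of_mem hTwz.symm
        have h2 : v ∉ ({u | T.Adj z u} \ {w}) := fun hh => hTvz hh.1.symm
        have h3 : 0 < {u | T.Adj z u}.ncard :=
          Set.ncard_pos (Set.toFinite _) |>.2 ⟨w, hTwz.symm⟩
        rw [← Set.ncard_image_of_injective {u : V' | T'.Adj x u} Subtype.val_injective, himg,
          Set.ncard_insert_of_notMem h2 (Set.toFinite _), h1, hxz]
        omega
      · have himg : Subtype.val '' {u : V' | T'.Adj x u} = {u | T.Adj x.1 u} := by
          ext u
          simp only [Set.mem_image, Set.mem_setOf_eq]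
          constructor
          · rintro ⟨b, (hadj | hpair), rfl⟩
            · exact hadj
            · rw [Sym2.eq_iff] at hpair
              rcases hpair with ⟨h1, _⟩ | ⟨h1, _⟩
              · exact absurd h1 hxv
              · exact absurd h1 hxz
          · intro hadj
            have hu : u ≠ w := by
              intro huw
              have h0 : T.Adj w x.1 := huw ▸ hadj.symm
              have h1 : x.1 ∈ ({v, z} : Set V) := by rw [← hNTw]; exact h0
              simp only [Set.mem_insert_iff, Set.mem_singleton_iff] at h1
              rcases h1 with h1 | h1
              · exact hxv h1
              · exact hxz h1
            exact ⟨⟨u, hu⟩, Or.inl hadj, rfl⟩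
        rw [← Set.ncard_image_of_injective {u : V' | T'.Adj x u} Subtype.val_injective, himg]
  -- conclusion
  have hsub : {x : V | 2 ≤ deg T x} ⊆
      insert w (Subtype.val '' {y : V' | 2 ≤ deg T' y}) := by
    intro x hx
    by_cases hxw : x = w
    · exact Or.inl hxw
    · exact Or.inr ⟨⟨x, hxw⟩, by rw [Set.mem_setOf_eq, hdeg]; exact hx, rfl⟩
  refine ⟨T', ⟨hle, htree⟩, ?_⟩
  calc internalCount T ≤ (insert w (Subtype.val '' {y : V' | 2 ≤ deg T' y})).ncard :=
        Set.ncard_le_ncard hsub (Set.toFinite _)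
    _ ≤ (Subtype.val '' {y : V' | 2 ≤ deg T' y}).ncard + 1 := Set.ncard_insert_le _ _
    _ = internalCount T' + 1 := by
        rw [Set.ncard_image_of_injective _ Subtype.val_injective, internalCount_def]

private lemma dir2 (h4 : 4 ≤ Fintype.card V) (hw : deg G w = 2)
    (hvw : G.Adj v w) (hwz : G.Adj w z) (hvz : v ≠ z) (hnadj : ¬ G.Adj v z)
    (T : SimpleGraph V) (hT : IsSpanningTree G T) :
    ∃ T' : SimpleGraph {x : V // x ≠ w},
      IsSpanningTree (SimpleGraph.fromRel
        (fun a b : {x : V // x ≠ w} => G.Adj a.1 b.1 ∨ (a.1 = v ∧ b.1 = z))) T' ∧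
      internalCount T ≤ internalCount T' + 1 := by
  have hNw : {u | G.Adj w u} = {v, z} := by
    refine (Set.eq_of_subset_of_ncard_le ?_ ?_ (Set.toFinite _)).symm
    · intro u hu
      rcases hu with rfl | rfl
      · exact hvw.symm
      · exact hwz
    · have h1 : {u | G.Adj w u}.ncard = 2 := hw
      rw [h1, Set.ncard_pair hvz]
  have hNTsub : {u | T.Adj w u} ⊆ {v, z} := by
    intro u hu
    rw [← hNw]
    exact hT.1 hu
  by_cases hbv : T.Adj w v <;> by_cases hbz : T.Adj w z
  · refine dir2_two h4 hvw hwz hvz hnadj T hT ?_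
    refine Set.Subset.antisymm hNTsub ?_
    intro u hu
    rcases hu with rfl | rfl
    · exact hbv
    · exact hbz
  · refine dir2_leaf hvw hwz T hT v hvw.ne ?_
    apply Set.Subset.antisymm
    · intro u hu
      rcases hNTsub hu with rfl | rfl
      · rfl
      · exact absurd hu hbz
    · intro u hu
      rcases hu with rfl
      exact hbv
  · refine dir2_leaf hvw hwz T hT z hwz.ne' ?_
    apply Set.Subset.antisymm
    · intro u hu
      rcases hNTsub hu with rfl | rfl
      · exact absurd hu hbv
      · rfl
    · intro u hu
      rcases hu with rfl
      exact hbz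
  · obtain ⟨u0, hu0⟩ := exists_adj' hT.2.isConnected (show w ≠ v from hvw.ne')
    rcases hNTsub hu0 with rfl | rfl
    · exact absurd hu0 hbv
    · exact absurd hu0 hbz

private lemma dir1B (h4 : 4 ≤ Fintype.card V) (hz : deg G z = 2)
    (hvw : G.Adj v w) (hwz : G.Adj w z) (hvz : v ≠ z)
    (T' : SimpleGraph {x : V // x ≠ w})
    (hT' : IsSpanningTree (SimpleGraph.fromRel
      (fun a b : {x : V // x ≠ w} => G.Adj a.1 b.1 ∨ (a.1 = v ∧ b.1 = z))) T')
    (hB : ¬ T'.Adj ⟨v, hvw.ne⟩ ⟨z, hwz.ne'⟩) :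
    ∃ T : SimpleGraph V, IsSpanningTree G T ∧ internalCount T = internalCount T' + 1 := by
  have hv' : v ≠ w := hvw.ne
  have hz' : z ≠ w := hwz.ne'
  have hB' : ∀ (p : v ≠ w) (q : z ≠ w), ¬ T'.Adj ⟨v, p⟩ ⟨z, q⟩ := fun _ _ => hB
  set T : SimpleGraph V :=
    { Adj := fun a b => (∃ (ha : a ≠ w) (hb : b ≠ w), T'.Adj ⟨a, ha⟩ ⟨b, hb⟩) ∨ s(a, b) = s(w, z)
      symm := by
        refine ⟨?_⟩; rintro a b (⟨ha, hb, hadj⟩ | h)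
        · exact Or.inl ⟨hb, ha, hadj.symm⟩
        · exact Or.inr (by rwa [Sym2.eq_swap])
      loopless := by
        refine ⟨?_⟩; rintro a (⟨ha, hb, hadj⟩ | h)
        · exact T'.irrefl hadj
        · rw [Sym2.eq_iff] at h
          rcases h with ⟨h1, h2⟩ | ⟨h1, h2⟩ <;> exact hz' (by rw [← h1, ← h2]) } with hTdef
  -- T ≤ G
  have hle : T ≤ G := by
    rintro a b (⟨ha, hb, hadj⟩ | h)
    · have := hT'.1 hadj
      rw [fromRel_adj] at this
      rcases this with ⟨hne, (hg | ⟨h1, h2⟩) | (hg | ⟨h1, h2⟩)⟩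
      · exact hg
      · exact absurd hadj (by subst h1; subst h2; exact hB' _ _)
      · exact hg.symm
      · exact absurd hadj.symm (by subst h1; subst h2; exact hB' _ _)
    · rw [Sym2.eq_iff] at h
      rcases h with ⟨rfl, rfl⟩ | ⟨rfl, rfl⟩
      · exact hwz
      · exact hwz.symm
  -- edge set
  have hE : T.edgeSet = insert s(w, z) (Sym2.map Subtype.val '' T'.edgeSet) := by
    ext e
    induction e with
    | _ a b =>
      simp only [mem_edgeSet, Set.mem_insert_iff, mem_sym2_image]
      constructor
      · rintro (⟨ha, hb, hadj⟩ | h)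
        · exact Or.inr ⟨ha, hb, hadj⟩
        · exact Or.inl h
      · rintro (h | ⟨ha, hb, hadj⟩)
        · exact Or.inr h
        · exact Or.inl ⟨ha, hb, hadj⟩
  have hwzn : s(w, z) ∉ Sym2.map Subtype.val '' T'.edgeSet := by
    rw [mem_sym2_image]
    rintro ⟨ha, _, _⟩
    exact ha rfl
  have hcardV2 : Fintype.card {x : V // x ≠ w} = Fintype.card V - 1 := card_ne w
  have hn' : T'.edgeSet.ncard + 1 = Fintype.card {x : V // x ≠ w} := edgeSet_ncard hT'.2
  have hET : T.edgeSet.ncard + 1 = Fintype.card V := by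
    rw [hE, Set.ncard_insert_of_notMem hwzn (Set.toFinite _),
      Set.ncard_image_of_injective _ sym2_val_inj]
    omega
  -- connectivity
  have hstep : ∀ a b : {x : V // x ≠ w}, T'.Adj a b → T.Reachable a.1 b.1 := by
    intro a b hadj
    exact Adj.reachable (Or.inl ⟨a.2, b.2, hadj⟩)
  have hreach : ∀ x : V, T.Reachable x z := by
    intro x
    by_cases hx : x = w
    · subst hx
      exact Adj.reachable (Or.inr rfl)
    · exact reach_map Subtype.val hstep (hT'.2.isConnected.preconnected ⟨x, hx⟩ ⟨z, hz'⟩)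
  have hconn : T.Connected := by
    have : Nonempty V := ⟨z⟩
    exact Connected.mk fun a b => (hreach a).trans (hreach b).symm
  have htree : T.IsTree := isTree_of_card hconn hET
  -- degree of z in T'
  have hdegz : deg T' ⟨z, hz'⟩ = 1 := by
    have hub : deg T' ⟨z, hz'⟩ ≤ 1 := by
      have hS : {b : {x : V // x ≠ w} | T'.Adj ⟨z, hz'⟩ b} ⊆ {b : {x : V // x ≠ w} | G.Adj z b.1} := by
        intro b hadj
        have := hT'.1 hadj
        rw [fromRel_adj] at this
        rcases this with ⟨hne, (hg | ⟨h1, _⟩) | (hg | ⟨h1, _⟩)⟩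
        · exact hg
        · exact absurd h1 (fun hh => hvz hh.symm)
        · exact hg.symm
        · exact absurd hadj (by
            have : b = ⟨v, hv'⟩ := Subtype.ext h1
            rw [this]
            exact fun hh => hB' _ _ hh.symm)
      have himg : Subtype.val '' {b : {x : V // x ≠ w} | G.Adj z b.1} = {u | G.Adj z u} \ {w} := by
        ext u
        simp only [Set.mem_image, Set.mem_setOf_eq, Set.mem_diff, Set.mem_singleton_iff]
        constructor
        · rintro ⟨b, hb, rfl⟩
          exact ⟨hb, b.2⟩
        · rintro ⟨hu, huw⟩
          exact ⟨⟨u, huw⟩, hu, rfl⟩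
      have hc1 : ({u | G.Adj z u} \ {w}).ncard = 1 := by
        have : {u | G.Adj z u}.ncard = 2 := hz
        rw [Set.ncard_sdiff_singleton_of_mem (show w ∈ {u | G.Adj z u} from hwz.symm),
          this]
      calc deg T' ⟨z, hz'⟩ ≤ {b : {x : V // x ≠ w} | G.Adj z b.1}.ncard :=
            Set.ncard_le_ncard hS (Set.toFinite _)
        _ = (Subtype.val '' {b : {x : V // x ≠ w} | G.Adj z b.1}).ncard :=
            (Set.ncard_image_of_injective _ Subtype.val_injective).symm
        _ = 1 := by rw [himg, hc1]
    have hlb : 1 ≤ deg T' ⟨z, hz'⟩ := by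
      obtain ⟨u, hu⟩ := exists_adj' hT'.2.isConnected
        (show (⟨z, hz'⟩ : {x : V // x ≠ w}) ≠ ⟨v, hv'⟩ from fun hh => hvz (congrArg Subtype.val hh).symm)
      exact Set.ncard_pos (Set.toFinite _) |>.2 ⟨u, hu⟩
    omega
  -- degrees in T
  have hNTw : {u | T.Adj w u} = {z} := by
    ext u
    simp only [Set.mem_setOf_eq, Set.mem_singleton_iff]
    constructor
    · rintro (⟨ha, _, _⟩ | h)
      · exact absurd rfl ha
      · rw [Sym2.eq_iff] at h
        rcases h with ⟨_, h2⟩ | ⟨h1, h2⟩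
        · exact h2
        · exact absurd h1.symm hz'
    · rintro rfl
      exact Or.inr rfl
  have hdegw : deg T w = 1 := by rw [deg_def, hNTw, Set.ncard_singleton]
  have hNz : {u | T.Adj z u} = insert w (Subtype.val '' {b : {x : V // x ≠ w} | T'.Adj ⟨z, hz'⟩ b}) := by
    ext u
    simp only [Set.mem_setOf_eq, Set.mem_insert_iff, Set.mem_image]
    constructor
    · rintro (⟨ha, hb, hadj⟩ | h)
      · exact Or.inr ⟨⟨u, hb⟩, hadj, rfl⟩
      · rw [Sym2.eq_iff] at h
        rcases h with ⟨h1, _⟩ | ⟨_, h2⟩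
        · exact absurd h1 hz'
        · exact Or.inl h2
    · rintro (rfl | ⟨b, hb, rfl⟩)
      · exact Or.inr (Sym2.eq_swap)
      · exact Or.inl ⟨hz', b.2, hb⟩
  have hdegTz : deg T z = 2 := by
    have hwn : w ∉ Subtype.val '' {b : {x : V // x ≠ w} | T'.Adj ⟨z, hz'⟩ b} := by
      rintro ⟨b, _, hb⟩
      exact b.2 hb
    rw [deg_def, hNz, Set.ncard_insert_of_notMem hwn (Set.toFinite _),
      Set.ncard_image_of_injective _ Subtype.val_injective]
    rw [show {b : {x : V // x ≠ w} | T'.Adj ⟨z, hz'⟩ b}.ncard = deg T' ⟨z, hz'⟩ from rfl, hdegz]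
  have hdeg : ∀ (x : V) (hx : x ≠ w), x ≠ z → deg T x = deg T' ⟨x, hx⟩ := by
    intro x hx hxz
    have himg : {u | T.Adj x u} = Subtype.val '' {b : {x : V // x ≠ w} | T'.Adj ⟨x, hx⟩ b} := by
      ext u
      simp only [Set.mem_setOf_eq, Set.mem_image]
      constructor
      · rintro (⟨ha, hb, hadj⟩ | h)
        · exact ⟨⟨u, hb⟩, hadj, rfl⟩
        · rw [Sym2.eq_iff] at h
          rcases h with ⟨h1, _⟩ | ⟨h1, _⟩
          · exact absurd h1 hx
          · exact absurd h1 hxz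
      · rintro ⟨b, hb, rfl⟩
        exact Or.inl ⟨hx, b.2, hb⟩
    rw [deg_def, himg, Set.ncard_image_of_injective _ Subtype.val_injective]
    rfl
  -- internal sets
  have hset : {x : V | 2 ≤ deg T x} = insert z (Subtype.val '' {y : {x : V // x ≠ w} | 2 ≤ deg T' y}) := by
    ext x
    simp only [Set.mem_setOf_eq, Set.mem_insert_iff, Set.mem_image]
    constructor
    · intro hx
      by_cases hxz : x = z
      · exact Or.inl hxz
      · have hxw : x ≠ w := by
          rintro rfl
          rw [hdegw] at hx
          omega
        exact Or.inr ⟨⟨x, hxw⟩, by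
          show 2 ≤ deg T' ⟨x, hxw⟩
          rw [← hdeg x hxw hxz]; exact hx, rfl⟩
    · rintro (rfl | ⟨y, hy, rfl⟩)
      · rw [hdegTz]
      · have hyz : y.1 ≠ z := by
          intro hh
          have heq : y = ⟨z, hz'⟩ := Subtype.ext hh
          have hy2 : 2 ≤ deg T' ⟨z, hz'⟩ := by rw [← heq]; exact hy
          rw [hdegz] at hy2
          omega
        rw [hdeg y.1 y.2 hyz, Subtype.coe_eta]
        exact hy
  have hzn : z ∉ Subtype.val '' {y : {x : V // x ≠ w} | 2 ≤ deg T' y} := by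
    rintro ⟨y, hy, hyz⟩
    have heq : y = ⟨z, hz'⟩ := Subtype.ext hyz
    have hy2 : 2 ≤ deg T' ⟨z, hz'⟩ := by rw [← heq]; exact hy
    rw [hdegz] at hy2
    omega
  refine ⟨T, ⟨hle, htree⟩, ?_⟩
  rw [internalCount_def, hset, Set.ncard_insert_of_notMem hzn (Set.toFinite _),
    Set.ncard_image_of_injective _ Subtype.val_injective, internalCount_def]

private lemma dir1A (h4 : 4 ≤ Fintype.card V)
    (hvw : G.Adj v w) (hwz : G.Adj w z) (hvz : v ≠ z)
    (T' : SimpleGraph {x : V // x ≠ w})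
    (hT' : IsSpanningTree (SimpleGraph.fromRel
      (fun a b : {x : V // x ≠ w} => G.Adj a.1 b.1 ∨ (a.1 = v ∧ b.1 = z))) T')
    (hA : T'.Adj ⟨v, hvw.ne⟩ ⟨z, hwz.ne'⟩) :
    ∃ T : SimpleGraph V, IsSpanningTree G T ∧ internalCount T = internalCount T' + 1 := by
  have hv' : v ≠ w := hvw.ne
  have hz' : z ≠ w := hwz.ne'
  have hA' : ∀ (p : v ≠ w) (q : z ≠ w), T'.Adj ⟨v, p⟩ ⟨z, q⟩ := fun _ _ => hA
  set T : SimpleGraph V :=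
    { Adj := fun a b => (s(a, b) ≠ s(v, z) ∧
          ∃ (ha : a ≠ w) (hb : b ≠ w), T'.Adj ⟨a, ha⟩ ⟨b, hb⟩) ∨
        s(a, b) = s(v, w) ∨ s(a, b) = s(w, z)
      symm := by
        refine ⟨?_⟩; rintro a b (⟨hne, ha, hb, hadj⟩ | h | h)
        · exact Or.inl ⟨by rwa [Sym2.eq_swap], hb, ha, hadj.symm⟩
        · exact Or.inr (Or.inl (by rwa [Sym2.eq_swap]))
        · exact Or.inr (Or.inr (by rwa [Sym2.eq_swap]))
      loopless := by
        refine ⟨?_⟩; rintro a (⟨_, _, _, hadj⟩ | h | h)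
        · exact T'.irrefl hadj
        · rw [Sym2.eq_iff] at h
          rcases h with ⟨h1, h2⟩ | ⟨h1, h2⟩ <;> exact hv' (by rw [← h1, ← h2])
        · rw [Sym2.eq_iff] at h
          rcases h with ⟨h1, h2⟩ | ⟨h1, h2⟩ <;> exact hz' (by rw [← h2, ← h1]) } with hTdef
  -- T ≤ G
  have hle : T ≤ G := by
    rintro a b (⟨hne, ha, hb, hadj⟩ | h | h)
    · have := hT'.1 hadj
      rw [fromRel_adj] at this
      rcases this with ⟨_, (hg | ⟨h1, h2⟩) | (hg | ⟨h1, h2⟩)⟩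
      · exact hg
      · exact absurd (by rw [show a = v from h1, show b = z from h2]) hne
      · exact hg.symm
      · exact absurd (by rw [show a = z from h2, show b = v from h1, Sym2.eq_swap]) hne
    · rw [Sym2.eq_iff] at h
      rcases h with ⟨rfl, rfl⟩ | ⟨rfl, rfl⟩
      · exact hvw
      · exact hvw.symm
    · rw [Sym2.eq_iff] at h
      rcases h with ⟨rfl, rfl⟩ | ⟨rfl, rfl⟩
      · exact hwz
      · exact hwz.symm
  -- edge set
  have hE : T.edgeSet = insert s(v, w) (insert s(w, z)
      ((Sym2.map Subtype.val '' T'.edgeSet) \ {s(v, z)})) := by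
    ext e
    induction e with
    | _ a b =>
      simp only [mem_edgeSet, Set.mem_insert_iff, Set.mem_diff, Set.mem_singleton_iff,
        mem_sym2_image]
      constructor
      · rintro (⟨hne, ha, hb, hadj⟩ | h | h)
        · exact Or.inr (Or.inr ⟨⟨ha, hb, hadj⟩, hne⟩)
        · exact Or.inl h
        · exact Or.inr (Or.inl h)
      · rintro (h | h | ⟨⟨ha, hb, hadj⟩, hne⟩)
        · exact Or.inr (Or.inl h)
        · exact Or.inr (Or.inr h)
        · exact Or.inl ⟨hne, ha, hb, hadj⟩
  have hvzE : s(v, z) ∈ Sym2.map Subtype.val '' T'.edgeSet := by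
    rw [mem_sym2_image]
    exact ⟨hv', hz', hA⟩
  have hwzn : s(w, z) ∉ (Sym2.map Subtype.val '' T'.edgeSet) \ {s(v, z)} := by
    rintro ⟨h, _⟩
    rw [mem_sym2_image] at h
    obtain ⟨ha, _, _⟩ := h
    exact ha rfl
  have hvwn : s(v, w) ∉ insert s(w, z) ((Sym2.map Subtype.val '' T'.edgeSet) \ {s(v, z)}) := by
    rintro (h | ⟨h, _⟩)
    · rw [Sym2.eq_iff] at h
      rcases h with ⟨h1, _⟩ | ⟨h1, _⟩
      · exact hv' h1
      · exact hvz h1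
    · rw [mem_sym2_image] at h
      obtain ⟨_, hb, _⟩ := h
      exact hb rfl
  have hcardV2 : Fintype.card {x : V // x ≠ w} = Fintype.card V - 1 := card_ne w
  have hn' : T'.edgeSet.ncard + 1 = Fintype.card {x : V // x ≠ w} := edgeSet_ncard hT'.2
  have hET : T.edgeSet.ncard + 1 = Fintype.card V := by
    have c0 : (Sym2.map Subtype.val '' T'.edgeSet).ncard = T'.edgeSet.ncard :=
      Set.ncard_image_of_injective _ sym2_val_inj
    have c1 : ((Sym2.map Subtype.val '' T'.edgeSet) \ {s(v, z)}).ncard =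
        (Sym2.map Subtype.val '' T'.edgeSet).ncard - 1 :=
      Set.ncard_sdiff_singleton_of_mem hvzE
    have p1 : 0 < (Sym2.map Subtype.val '' T'.edgeSet).ncard :=
      Set.ncard_pos (Set.toFinite _) |>.2 ⟨s(v, z), hvzE⟩
    rw [hE, Set.ncard_insert_of_notMem hvwn (Set.toFinite _),
      Set.ncard_insert_of_notMem hwzn (Set.toFinite _), c1, c0]
    omega
  -- connectivity
  have hstep : ∀ a b : {x : V // x ≠ w}, T'.Adj a b → T.Reachable a.1 b.1 := by
    intro a b hadj
    by_cases hne : s(a.1, b.1) = s(v, z)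
    · rw [Sym2.eq_iff] at hne
      rcases hne with ⟨h1, h2⟩ | ⟨h1, h2⟩
      · rw [h1, h2]
        exact (Adj.reachable (Or.inr (Or.inl rfl))).trans (Adj.reachable (Or.inr (Or.inr rfl)))
      · rw [h1, h2]
        exact ((Adj.reachable (Or.inr (Or.inl rfl))).trans
          (Adj.reachable (Or.inr (Or.inr rfl)))).symm
    · exact Adj.reachable (Or.inl ⟨hne, a.2, b.2, hadj⟩)
  have hreach : ∀ x : V, T.Reachable x v := by
    intro x
    by_cases hx : x = w
    · subst hx
      exact Adj.reachable (Or.inr (Or.inl Sym2.eq_swap))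
    · exact reach_map Subtype.val hstep (hT'.2.isConnected.preconnected ⟨x, hx⟩ ⟨v, hv'⟩)
  have hconn : T.Connected := by
    have : Nonempty V := ⟨v⟩
    exact Connected.mk fun a b => (hreach a).trans (hreach b).symm
  have htree : T.IsTree := isTree_of_card hconn hET
  -- degrees
  have hNTw : {u | T.Adj w u} = {v, z} := by
    ext u
    simp only [Set.mem_setOf_eq, Set.mem_insert_iff, Set.mem_singleton_iff]
    constructor
    · rintro (⟨_, ha, _, _⟩ | h | h)
      · exact absurd rfl ha
      · rw [Sym2.eq_iff] at h
        rcases h with ⟨h1, _⟩ | ⟨_, h2⟩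
        · exact absurd h1.symm hv'
        · exact Or.inl h2
      · rw [Sym2.eq_iff] at h
        rcases h with ⟨_, h2⟩ | ⟨h1, _⟩
        · exact Or.inr h2
        · exact absurd h1.symm hz'
    · rintro (rfl | rfl)
      · exact Or.inr (Or.inl Sym2.eq_swap)
      · exact Or.inr (Or.inr rfl)
  have hdegw : deg T w = 2 := by rw [deg_def, hNTw, Set.ncard_pair hvz]
  have hdegv : deg T v = deg T' ⟨v, hv'⟩ := by
    have himg : {u | T.Adj v u} =
        insert w (Subtype.val '' ({b | T'.Adj ⟨v, hv'⟩ b} \ {⟨z, hz'⟩})) := by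
      ext u
      simp only [Set.mem_setOf_eq, Set.mem_insert_iff, Set.mem_image, Set.mem_diff,
        Set.mem_singleton_iff]
      constructor
      · rintro (⟨hne, ha, hb, hadj⟩ | h | h)
        · refine Or.inr ⟨⟨u, hb⟩, ⟨hadj, fun hh => ?_⟩, rfl⟩
          have : u = z := congrArg Subtype.val hh
          exact hne (by rw [this])
        · rw [Sym2.eq_iff] at h
          rcases h with ⟨_, h2⟩ | ⟨h1, _⟩
          · exact Or.inl h2
          · exact absurd h1 hv'
        · rw [Sym2.eq_iff] at h
          rcases h with ⟨h1, _⟩ | ⟨h1, _⟩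
          · exact absurd h1 hv'
          · exact absurd h1 hvz
      · rintro (rfl | ⟨b, ⟨hadj, hbz⟩, rfl⟩)
        · exact Or.inr (Or.inl rfl)
        · refine Or.inl ⟨fun hh => ?_, hv', b.2, hadj⟩
          rw [Sym2.eq_iff] at hh
          rcases hh with ⟨_, h2⟩ | ⟨h1, _⟩
          · exact hbz (Subtype.ext h2)
          · exact hvz h1
    have hzi : (⟨z, hz'⟩ : {x : V // x ≠ w}) ∈ {b | T'.Adj ⟨v, hv'⟩ b} := hA
    have hwn : w ∉ Subtype.val '' ({b | T'.Adj ⟨v, hv'⟩ b} \ {⟨z, hz'⟩}) := by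
      rintro ⟨b, _, hb⟩
      exact b.2 hb
    have hp : 0 < {b | T'.Adj ⟨v, hv'⟩ b}.ncard :=
      Set.ncard_pos (Set.toFinite _) |>.2 ⟨_, hzi⟩
    rw [deg_def, himg, Set.ncard_insert_of_notMem hwn (Set.toFinite _),
      Set.ncard_image_of_injective _ Subtype.val_injective,
      Set.ncard_sdiff_singleton_of_mem hzi]
    rw [show deg T' ⟨v, hv'⟩ = {b | T'.Adj ⟨v, hv'⟩ b}.ncard from rfl]
    omega
  have hdegz : deg T z = deg T' ⟨z, hz'⟩ := by
    have himg : {u | T.Adj z u} =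
        insert w (Subtype.val '' ({b | T'.Adj ⟨z, hz'⟩ b} \ {⟨v, hv'⟩})) := by
      ext u
      simp only [Set.mem_setOf_eq, Set.mem_insert_iff, Set.mem_image, Set.mem_diff,
        Set.mem_singleton_iff]
      constructor
      · rintro (⟨hne, ha, hb, hadj⟩ | h | h)
        · refine Or.inr ⟨⟨u, hb⟩, ⟨hadj, fun hh => ?_⟩, rfl⟩
          have : u = v := congrArg Subtype.val hh
          exact hne (by rw [this, Sym2.eq_swap])
        · rw [Sym2.eq_iff] at h
          rcases h with ⟨h1, _⟩ | ⟨h1, _⟩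
          · exact absurd h1.symm hvz
          · exact absurd h1 hz'
        · rw [Sym2.eq_iff] at h
          rcases h with ⟨h1, _⟩ | ⟨_, h2⟩
          · exact absurd h1 hz'
          · exact Or.inl h2
      · rintro (rfl | ⟨b, ⟨hadj, hbv⟩, rfl⟩)
        · exact Or.inr (Or.inr Sym2.eq_swap)
        · refine Or.inl ⟨fun hh => ?_, hz', b.2, hadj⟩
          rw [Sym2.eq_iff] at hh
          rcases hh with ⟨h1, _⟩ | ⟨_, h2⟩
          · exact hvz h1.symm
          · exact hbv (Subtype.ext h2)
    have hvi : (⟨v, hv'⟩ : {x : V // x ≠ w}) ∈ {b | T'.Adj ⟨z, hz'⟩ b} := hA.symm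
    have hwn : w ∉ Subtype.val '' ({b | T'.Adj ⟨z, hz'⟩ b} \ {⟨v, hv'⟩}) := by
      rintro ⟨b, _, hb⟩
      exact b.2 hb
    have hp : 0 < {b | T'.Adj ⟨z, hz'⟩ b}.ncard :=
      Set.ncard_pos (Set.toFinite _) |>.2 ⟨_, hvi⟩
    rw [deg_def, himg, Set.ncard_insert_of_notMem hwn (Set.toFinite _),
      Set.ncard_image_of_injective _ Subtype.val_injective,
      Set.ncard_sdiff_singleton_of_mem hvi]
    rw [show deg T' ⟨z, hz'⟩ = {b | T'.Adj ⟨z, hz'⟩ b}.ncard from rfl]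
    omega
  have hdego : ∀ (x : V) (hx : x ≠ w), x ≠ v → x ≠ z → deg T x = deg T' ⟨x, hx⟩ := by
    intro x hx hxv hxz
    have himg : {u | T.Adj x u} = Subtype.val '' {b | T'.Adj ⟨x, hx⟩ b} := by
      ext u
      simp only [Set.mem_setOf_eq, Set.mem_image]
      constructor
      · rintro (⟨hne, ha, hb, hadj⟩ | h | h)
        · exact ⟨⟨u, hb⟩, hadj, rfl⟩
        · rw [Sym2.eq_iff] at h
          rcases h with ⟨h1, _⟩ | ⟨h1, _⟩
          · exact absurd h1 hxv
          · exact absurd h1 hx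
        · rw [Sym2.eq_iff] at h
          rcases h with ⟨h1, _⟩ | ⟨h1, _⟩
          · exact absurd h1 hx
          · exact absurd h1 hxz
      · rintro ⟨b, hb, rfl⟩
        refine Or.inl ⟨fun hh => ?_, hx, b.2, hb⟩
        rw [Sym2.eq_iff] at hh
        rcases hh with ⟨h1, _⟩ | ⟨h1, _⟩
        · exact hxv h1
        · exact hxz h1
    rw [deg_def, himg, Set.ncard_image_of_injective _ Subtype.val_injective]
    rfl
  have hdeg : ∀ x : {x : V // x ≠ w}, deg T x.1 = deg T' x := by
    intro x
    rcases eq_or_ne x.1 v with hxv | hxv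
    · have : x = ⟨v, hv'⟩ := Subtype.ext hxv
      rw [this]; exact hdegv
    · rcases eq_or_ne x.1 z with hxz | hxz
      · have : x = ⟨z, hz'⟩ := Subtype.ext hxz
        rw [this]; exact hdegz
      · rw [show x = ⟨x.1, x.2⟩ from rfl]
        exact hdego x.1 x.2 hxv hxz
  -- internal sets
  have hset : {x : V | 2 ≤ deg T x} = insert w (Subtype.val '' {y | 2 ≤ deg T' y}) := by
    ext x
    simp only [Set.mem_setOf_eq, Set.mem_insert_iff, Set.mem_image]
    constructor
    · intro hx
      by_cases hxw : x = w
      · exact Or.inl hxw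
      · exact Or.inr ⟨⟨x, hxw⟩, by
          show 2 ≤ deg T' ⟨x, hxw⟩
          rw [← hdeg ⟨x, hxw⟩]; exact hx, rfl⟩
    · rintro (rfl | ⟨y, hy, rfl⟩)
      · rw [hdegw]
      · rw [show deg T y.1 = deg T' y from hdeg y]
        exact hy
  have hwn2 : w ∉ Subtype.val '' {y : {x : V // x ≠ w} | 2 ≤ deg T' y} := by
    rintro ⟨y, _, hy⟩
    exact y.2 hy
  refine ⟨T, ⟨hle, htree⟩, ?_⟩
  rw [internalCount_def, hset, Set.ncard_insert_of_notMem hwn2 (Set.toFinite _),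
    Set.ncard_image_of_injective _ Subtype.val_injective, internalCount_def]

private lemma dir1 (h4 : 4 ≤ Fintype.card V) (hz : deg G z = 2)
    (hvw : G.Adj v w) (hwz : G.Adj w z) (hvz : v ≠ z)
    (T' : SimpleGraph {x : V // x ≠ w})
    (hT' : IsSpanningTree (SimpleGraph.fromRel
      (fun a b : {x : V // x ≠ w} => G.Adj a.1 b.1 ∨ (a.1 = v ∧ b.1 = z))) T') :
    ∃ T : SimpleGraph V, IsSpanningTree G T ∧ internalCount T = internalCount T' + 1 := by
  by_cases hA : T'.Adj ⟨v, hvw.ne⟩ ⟨z, hwz.ne'⟩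
  · exact dir1A h4 hvw hwz hvz T' hT' hA
  · exact dir1B h4 hz hvw hwz hvz T' hT' hA

end Main

theorem stmt14 {V : Type*} [Fintype V] [DecidableEq V] (G : SimpleGraph V)
    (hG : G.Connected) (h4 : 4 ≤ Fintype.card V) (v w z : V)
    (hw : deg G w = 2) (hz : deg G z = 2) (hvw : G.Adj v w) (hwz : G.Adj w z)
    (hvz : v ≠ z) (hnadj : ¬ G.Adj v z) :
    sSup {n : ℕ | ∃ T : SimpleGraph V, IsSpanningTree G T ∧ internalCount T = n} =
      1 + sSup {n : ℕ | ∃ T' : SimpleGraph {x : V // x ≠ w},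
        IsSpanningTree (SimpleGraph.fromRel
          (fun a b : {x : V // x ≠ w} => G.Adj a.1 b.1 ∨ (a.1 = v ∧ b.1 = z))) T' ∧
        internalCount T' = n} := by
  set A := {n : ℕ | ∃ T : SimpleGraph V, IsSpanningTree G T ∧ internalCount T = n} with hA
  set B := {n : ℕ | ∃ T' : SimpleGraph {x : V // x ≠ w},
    IsSpanningTree (SimpleGraph.fromRel
      (fun a b : {x : V // x ≠ w} => G.Adj a.1 b.1 ∨ (a.1 = v ∧ b.1 = z))) T' ∧
    internalCount T' = n} with hB
  have hbddA : BddAbove A := by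
    refine ⟨Fintype.card V, ?_⟩
    rintro n ⟨T, _, rfl⟩
    calc internalCount T ≤ (Set.univ : Set V).ncard :=
          Set.ncard_le_ncard (Set.subset_univ _) (Set.toFinite _)
      _ = Fintype.card V := by rw [Set.ncard_univ, Nat.card_eq_fintype_card]
  have hbddB : BddAbove B := by
    refine ⟨Fintype.card {x : V // x ≠ w}, ?_⟩
    rintro n ⟨T', _, rfl⟩
    calc internalCount T' ≤ (Set.univ : Set {x : V // x ≠ w}).ncard :=
          Set.ncard_le_ncard (Set.subset_univ _) (Set.toFinite _)
      _ = Fintype.card {x : V // x ≠ w} := by rw [Set.ncard_univ, Nat.card_eq_fintype_card]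
  obtain ⟨T0, hT0le, hT0⟩ := exists_spanning_tree _ G rfl hG
  have hAne : A.Nonempty := ⟨internalCount T0, T0, ⟨hT0le, hT0⟩, rfl⟩
  have hBne : B.Nonempty := by
    obtain ⟨T', hT', _⟩ := dir2 h4 hw hvw hwz hvz hnadj T0 ⟨hT0le, hT0⟩
    exact ⟨internalCount T', T', hT', rfl⟩
  have h1 : sSup A ≤ 1 + sSup B := by
    obtain ⟨T, hT, hTn⟩ := Nat.sSup_mem hAne hbddA
    obtain ⟨T', hT', hle⟩ := dir2 h4 hw hvw hwz hvz hnadj T hT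
    have : internalCount T' ≤ sSup B := le_csSup hbddB ⟨T', hT', rfl⟩
    omega
  have h2 : 1 + sSup B ≤ sSup A := by
    obtain ⟨T', hT', hTn⟩ := Nat.sSup_mem hBne hbddB
    obtain ⟨T, hT, hTeq⟩ := dir1 h4 hz hvw hwz hvz T' hT'
    have : internalCount T ≤ sSup A := le_csSup hbddA ⟨T, hT, rfl⟩
    omega
  omega
end
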